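/- arXiv:1809.08480 — 9 statements merged into one kernel-verified Lean document; each statement's English description precedes it below -/
import Mathlib

section
/- Suppose X is a set of cardinals, U(κ, μ, θ, χ) holds for each χ ∈ X, and cf(sup X) < cf(θ). Then U(κ, μ, θ, sup X) holds. -/
open Cardinal Set Ordinal

noncomputable section

/-- `s` (a set in a `Type 1`, such as a set of ordinals) has small cardinality `μ`. -/
def HasCard {α : Type 1} (s : Set α) (μ : Cardinal.{0}) : Prop :=
  Cardinal.mk s = Cardinal.lift.{1, 0} μ

/-- `a < b` for sets of ordinals: every element of `a` is below every element of `b`. -/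
def SetLT (a b : Set Ordinal) : Prop := ∀ α ∈ a, ∀ β ∈ b, α < β

/-- `A` is a family of `κ`-many pairwise disjoint subsets of `κ`, each of cardinality `χ'`. -/
def IsDisjFamily (κ χ' : Cardinal) (A : Set (Set Ordinal)) : Prop :=
  (∀ a ∈ A, a ⊆ Set.Iio κ.ord ∧ HasCard a χ') ∧
    A.PairwiseDisjoint id ∧ HasCard A κ

/-- `A` is a family of `κ`-many pairwise disjoint subsets of `κ`, each of cardinality `< χ`. -/
def IsDisjFamilyLT (κ χ : Cardinal) (A : Set (Set Ordinal)) : Prop :=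
  (∀ a ∈ A, a ⊆ Set.Iio κ.ord ∧ Cardinal.mk a < Cardinal.lift.{1, 0} χ) ∧
    A.PairwiseDisjoint id ∧ HasCard A κ

/-- `c` is a coloring of pairs of ordinals below `κ` with colors `< θ`. -/
def IsColoring (κ θ : Cardinal) (c : Ordinal → Ordinal → Ordinal) : Prop :=
  ∀ α β : Ordinal, α < β → β < κ.ord → c α β < θ.ord

/-- `c` witnesses `U(κ, μ, θ, χ)`. -/
def WitnessU (κ μ θ χ : Cardinal) (c : Ordinal → Ordinal → Ordinal) : Prop :=
  IsColoring κ θ c ∧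
    ∀ χ' < χ, ∀ A : Set (Set Ordinal), IsDisjFamily κ χ' A →
      ∀ i < θ.ord, ∃ B ⊆ A, HasCard B μ ∧
        ∀ a ∈ B, ∀ b ∈ B, SetLT a b → ∀ α ∈ a, ∀ β ∈ b, i < c α β

/-- The principle `U(κ, μ, θ, χ)`. -/
def U (κ μ θ χ : Cardinal) : Prop := ∃ c, WitnessU κ μ θ χ c

/-- `D` is a club in (the ordinal) `o`: a closed and unbounded subset of `o`. -/
def IsClubOrd (D : Set Ordinal) (o : Ordinal) : Prop :=
  D ⊆ Set.Iio o ∧ (∀ α < o, ∃ β ∈ D, α ≤ β) ∧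
    ∀ γ < o, 0 < γ → (∀ x < γ, ∃ β ∈ D, x < β ∧ β < γ) → γ ∈ D

/-- `S` is stationary in `o`: it meets every club in `o`. -/
def IsStationaryOrd (S : Set Ordinal) (o : Ordinal) : Prop :=
  ∀ D, IsClubOrd D o → (S ∩ D).Nonempty

theorem stmt1 (κ μ θ : Cardinal) (X : Set Cardinal)
    (hκreg : κ.IsRegular) (hκunc : ℵ₀ < κ) (hμκ : μ ≤ κ) (hθκ : θ ≤ κ)
    (hXκ : ∀ χ ∈ X, χ ≤ κ)
    (hU : ∀ χ ∈ X, U κ μ θ χ)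
    (hcf : (sSup X).ord.cof < θ.ord.cof) :
    U κ μ θ (sSup X) := by
  have hθ0 : (0 : Ordinal) < θ.ord := by
    rcases eq_or_ne θ.ord 0 with h | h
    · rw [h, Ordinal.cof_zero] at hcf
      exact absurd hcf (Cardinal.zero_le _).not_gt
    · exact pos_iff_ne_zero.2 h
  rcases X.eq_empty_or_nonempty with rfl | hne
  · refine ⟨fun _ _ => 0, fun α β _ _ => hθ0, ?_⟩
    intro χ' hχ'
    simp only [csSup_empty] at hχ'
    exact absurd hχ' (by simp)
  · obtain ⟨ι, f, hlsub, hcard⟩ := Ordinal.exists_lsub_cof (sSup X).ord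
    have hfi : ∀ i, (f i).card < sSup X := by
      intro i
      have : f i < (sSup X).ord := hlsub ▸ Ordinal.lt_lsub f i
      exact Cardinal.lt_ord.1 this
    have hχ : ∀ i : ι, ∃ χ ∈ X, (f i).card < χ := fun i =>
      exists_lt_of_lt_csSup hne (hfi i)
    choose χ hχX hχlt using hχ
    have hw : ∀ i : ι, ∃ c, WitnessU κ μ θ (χ i) c := fun i => hU (χ i) (hχX i)
    choose w hwspec using hw
    refine ⟨fun α β => ⨆ i, w i α β, ?_, ?_⟩
    · intro α β hαβ hβ
      apply Ordinal.iSup_lt_ord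
      · rw [hcard]; exact hcf
      · exact fun i => (hwspec i).1 α β hαβ hβ
    · intro χ' hχ' A hA j hj
      -- find i with χ' < χ i
      have hχ'lt : χ'.ord < (sSup X).ord := Cardinal.ord_lt_ord.2 hχ'
      rw [← hlsub, Ordinal.lt_lsub_iff] at hχ'lt
      obtain ⟨i, hi⟩ := hχ'lt
      have hχ'i : χ' < χ i := by
        refine lt_of_le_of_lt ?_ (hχlt i)
        calc χ' = χ'.ord.card := (Cardinal.card_ord χ').symm
        _ ≤ (f i).card := Ordinal.card_le_card hi
      obtain ⟨B, hBA, hBcard, hB⟩ := (hwspec i).2 χ' hχ'i A hA j hj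
      refine ⟨B, hBA, hBcard, ?_⟩
      intro a ha b hb hab α hα β hβ
      refine lt_of_lt_of_le (hB a ha b hb hab α hα β hβ) ?_
      exact le_ciSup (Ordinal.bddAbove_range _) i
end
end

section
/- If a coloring c : [κ]² → θ witnesses U(κ, κ, θ, 3), then it also witnesses U(κ, κ, θ, ω). -/
open Cardinal Set Ordinal

noncomputable section

/-- `D` is a club in (the ordinal) `o`: a closed and unbounded subset of `o`. -/
def IsClubBelow (D : Set Ordinal) (o : Ordinal) : Prop :=
  D ⊆ Set.Iio o ∧ (∀ α < o, ∃ β ∈ D, α ≤ β) ∧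
    ∀ γ < o, 0 < γ → (∀ x < γ, ∃ β ∈ D, x < β ∧ β < γ) → γ ∈ D

/-- `S` is stationary in `o`: it meets every club in `o`. -/
def IsStationaryBelow (S : Set Ordinal) (o : Ordinal) : Prop :=
  ∀ D, IsClubBelow D o → (S ∩ D).Nonempty

/-- Key extraction lemma: given a κ-family `B` and a `χ'`-sized selection `s a ⊆ a`
with `χ' < 3`, we can extract a κ-subfamily on which colors between the selected
elements exceed `i`. -/
lemma extract_aux (κ θ : Cardinal) (c : Ordinal → Ordinal → Ordinal)
    (hc : WitnessU κ κ θ 3 c) (i : Ordinal) (hi : i < θ.ord)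
    (χ' : Cardinal) (hχ' : χ' < 3)
    (B : Set (Set Ordinal)) (hBsub : ∀ a ∈ B, a ⊆ Set.Iio κ.ord)
    (hBdisj : B.PairwiseDisjoint id) (hBcard : HasCard B κ)
    (s : Set Ordinal → Set Ordinal)
    (hs : ∀ a ∈ B, s a ⊆ a) (hsne : ∀ a ∈ B, (s a).Nonempty)
    (hscard : ∀ a ∈ B, HasCard (s a) χ') :
    ∃ B' ⊆ B, HasCard B' κ ∧ ∀ a ∈ B', ∀ b ∈ B', SetLT a b →
      ∀ α ∈ s a, ∀ β ∈ s b, i < c α β := by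
  have hinj : Set.InjOn s B := by
    intro a ha b hb hab
    by_contra hne
    obtain ⟨α, hα⟩ := hsne a ha
    have h1 : α ∈ a := hs a ha hα
    have h2 : α ∈ b := hs b hb (hab ▸ hα)
    exact (hBdisj ha hb hne).le_bot (⟨h1, h2⟩ : α ∈ a ∩ b)
  have hfam : IsDisjFamily κ χ' (s '' B) := by
    refine ⟨?_, ?_, ?_⟩
    · rintro _ ⟨a, ha, rfl⟩
      exact ⟨(hs a ha).trans (hBsub a ha), hscard a ha⟩
    · rintro _ ⟨a, ha, rfl⟩ _ ⟨b, hb, rfl⟩ hne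
      have hab : a ≠ b := fun h => hne (by rw [h])
      exact Disjoint.mono (hs a ha) (hs b hb) (hBdisj ha hb hab)
    · show Cardinal.mk _ = _
      rw [Cardinal.mk_image_eq_of_injOn _ _ hinj]
      exact hBcard
  obtain ⟨C, hCsub, hCcard, hCprop⟩ := hc.2 χ' hχ' (s '' B) hfam i hi
  refine ⟨{a ∈ B | s a ∈ C}, fun a ha => ha.1, ?_, ?_⟩
  · have himg : s '' {a ∈ B | s a ∈ C} = C := by
      apply Set.Subset.antisymm
      · rintro _ ⟨a, ⟨haB, haC⟩, rfl⟩; exact haC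
      · intro x hx
        obtain ⟨a, haB, rfl⟩ := hCsub hx
        exact ⟨a, ⟨haB, hx⟩, rfl⟩
    show Cardinal.mk _ = _
    rw [← Cardinal.mk_image_eq_of_injOn _ _ (hinj.mono (Set.sep_subset _ _)), himg]
    exact hCcard
  · intro a ha b hb hlt α hα β hβ
    have hlt' : SetLT (s a) (s b) := fun x hx y hy => hlt x (hs a ha.1 hx) y (hs b hb.1 hy)
    exact hCprop (s a) ha.2 (s b) hb.2 hlt' α hα β hβ

/-- Step lemma: refine a κ-family so that colors between `f a` and `g b` exceed `i`. -/
lemma step_aux (κ θ : Cardinal) (c : Ordinal → Ordinal → Ordinal)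
    (hκunc : ℵ₀ < κ) (hc : WitnessU κ κ θ 3 c) (i : Ordinal) (hi : i < θ.ord)
    (B : Set (Set Ordinal)) (hBsub : ∀ a ∈ B, a ⊆ Set.Iio κ.ord)
    (hBdisj : B.PairwiseDisjoint id) (hBcard : HasCard B κ)
    (f g : Set Ordinal → Ordinal)
    (hf : ∀ a ∈ B, f a ∈ a) (hg : ∀ a ∈ B, g a ∈ a) :
    ∃ B' ⊆ B, HasCard B' κ ∧ ∀ a ∈ B', ∀ b ∈ B', SetLT a b → i < c (f a) (g b) := by
  set B₁ : Set (Set Ordinal) := {a ∈ B | f a = g a} with hB₁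
  set B₂ : Set (Set Ordinal) := {a ∈ B | f a ≠ g a} with hB₂
  have hκlift : ℵ₀ ≤ Cardinal.lift.{1,0} κ := by
    rw [← Cardinal.lift_aleph0.{1,0}]
    exact Cardinal.lift_le.mpr hκunc.le
  have hone : HasCard B₁ κ ∨ HasCard B₂ κ := by
    by_contra h
    push_neg at h
    obtain ⟨h1, h2⟩ := h
    have hle1 : Cardinal.mk B₁ < Cardinal.lift.{1,0} κ :=
      lt_of_le_of_ne (hBcard ▸ Cardinal.mk_le_mk_of_subset (Set.sep_subset _ _)) h1
    have hle2 : Cardinal.mk B₂ < Cardinal.lift.{1,0} κ :=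
      lt_of_le_of_ne (hBcard ▸ Cardinal.mk_le_mk_of_subset (Set.sep_subset _ _)) h2
    have hun : B ⊆ B₁ ∪ B₂ := by
      intro a ha
      by_cases hfg : f a = g a
      · exact Or.inl ⟨ha, hfg⟩
      · exact Or.inr ⟨ha, hfg⟩
    have : Cardinal.lift.{1,0} κ ≤ Cardinal.mk B₁ + Cardinal.mk B₂ :=
      hBcard ▸ le_trans (Cardinal.mk_le_mk_of_subset hun) (Cardinal.mk_union_le _ _)
    exact absurd this (not_le.mpr (Cardinal.add_lt_of_lt hκlift hle1 hle2))
  rcases hone with hcard | hcard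
  · -- on B₁, f = g; use singletons
    obtain ⟨B', hB'sub, hB'card, hB'prop⟩ := extract_aux κ θ c hc i hi 1 (by norm_num)
      B₁ (fun a ha => hBsub a ha.1) (hBdisj.subset (Set.sep_subset _ _)) hcard
      (fun a => {f a}) (fun a ha => Set.singleton_subset_iff.mpr (hf a ha.1))
      (fun a ha => Set.singleton_nonempty _)
      (fun a ha => by simp [HasCard])
    refine ⟨B', fun a ha => (hB'sub ha).1, hB'card, ?_⟩
    intro a ha b hb hlt
    have hgb : g b = f b := ((hB'sub hb).2).symm
    rw [hgb]
    exact hB'prop a ha b hb hlt (f a) rfl (f b) rfl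
  · -- on B₂, f ≠ g; use pairs
    obtain ⟨B', hB'sub, hB'card, hB'prop⟩ := extract_aux κ θ c hc i hi 2 (by norm_num)
      B₂ (fun a ha => hBsub a ha.1) (hBdisj.subset (Set.sep_subset _ _)) hcard
      (fun a => {f a, g a})
      (fun a ha => by
        intro x hx
        rcases hx with rfl | hx
        · exact hf a ha.1
        · rw [Set.mem_singleton_iff] at hx; rw [hx]; exact hg a ha.1)
      (fun a ha => ⟨f a, Or.inl rfl⟩)
      (fun a ha => by
        show Cardinal.mk _ = _
        rw [Cardinal.mk_insert (by simpa using ha.2), Cardinal.mk_singleton]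
        norm_num)
    refine ⟨B', fun a ha => (hB'sub ha).1, hB'card, ?_⟩
    intro a ha b hb hlt
    exact hB'prop a ha b hb hlt (f a) (Or.inl rfl) (g b) (Or.inr rfl)

theorem stmt2 (κ θ : Cardinal) (c : Ordinal → Ordinal → Ordinal)
    (hκreg : κ.IsRegular) (hκunc : ℵ₀ < κ) (hθκ : θ ≤ κ)
    (hc : WitnessU κ κ θ 3 c) :
    WitnessU κ κ θ ℵ₀ c := by
  refine ⟨hc.1, ?_⟩
  intro χ' hχ' A hA i hi
  obtain ⟨n, rfl⟩ := Cardinal.lt_aleph0.mp hχ'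
  obtain ⟨hAsets, hAdisj, hAcard⟩ := hA
  -- choose enumerations of the members of A
  have hE : ∀ a ∈ A, ∃ e : Fin n → Ordinal, Set.range e = a := by
    intro a ha
    have hcard : Cardinal.mk a = Cardinal.lift.{1,0} n := (hAsets a ha).2
    have : Nonempty (ULift.{1} (Fin n) ≃ ↥a) := by
      rw [← Cardinal.eq]
      simp [hcard]
    obtain ⟨e⟩ := this
    refine ⟨fun j => (e ⟨j⟩ : Ordinal), ?_⟩
    apply Set.Subset.antisymm
    · rintro _ ⟨j, rfl⟩; exact (e ⟨j⟩).2
    · intro x hx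
      obtain ⟨u, hu⟩ := e.surjective ⟨x, hx⟩
      exact ⟨u.down, congrArg Subtype.val hu⟩
  choose! E hE2 using hE
  have hmem : ∀ a ∈ A, ∀ j : Fin n, E a j ∈ a := fun a ha j => by
    have h := Set.mem_range_self (f := E a) j
    rwa [hE2 a ha] at h
  -- refine over all pairs of positions
  have key : ∀ L : List (Fin n × Fin n), ∃ B ⊆ A, HasCard B κ ∧
      ∀ a ∈ B, ∀ b ∈ B, SetLT a b → ∀ p ∈ L, i < c (E a p.1) (E b p.2) := by
    intro L
    induction L with
    | nil => exact ⟨A, subset_rfl, hAcard, by simp⟩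
    | cons p L ih =>
      obtain ⟨B, hBA, hBcard, hBprop⟩ := ih
      obtain ⟨B', hB'B, hB'card, hB'prop⟩ := step_aux κ θ c hκunc hc i hi B
        (fun a ha => (hAsets a (hBA ha)).1) (hAdisj.subset hBA) hBcard
        (fun a => E a p.1) (fun a => E a p.2)
        (fun a ha => hmem a (hBA ha) p.1) (fun a ha => hmem a (hBA ha) p.2)
      refine ⟨B', hB'B.trans hBA, hB'card, ?_⟩
      intro a ha b hb hlt q hq
      rcases List.mem_cons.mp hq with rfl | hq
      · exact hB'prop a ha b hb hlt
      · exact hBprop a (hB'B ha) b (hB'B hb) hlt q hq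
  obtain ⟨B, hBA, hBcard, hBprop⟩ := key (Finset.univ : Finset (Fin n × Fin n)).toList
  refine ⟨B, hBA, hBcard, ?_⟩
  intro a ha b hb hlt α hα β hβ
  rw [← hE2 a (hBA ha)] at hα
  rw [← hE2 b (hBA hb)] at hβ
  obtain ⟨j, rfl⟩ := hα
  obtain ⟨k, rfl⟩ := hβ
  exact hBprop a ha b hb hlt (j, k) (by simp [Finset.mem_toList])
end
end

section
/- Suppose that for some cardinal λ, (λ^{<θ})⁺ ≤ κ ≤ λ^θ. Then there exists a coloring c : [κ]² → θ witnessing U(κ, κ, θ, 2) that fails to witness U(κ, 2, θ, 3). -/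
open Cardinal Set Ordinal

noncomputable section

/-- Pigeonhole: a map from a `lift κ`-sized type to a small type has a `lift κ`-sized fiber. -/
theorem exists_big_fiber {κ : Cardinal.{0}} (hκreg : κ.IsRegular)
    {X Y : Type 1} (hX : #X = Cardinal.lift.{1} κ) (hY : #Y < Cardinal.lift.{1} κ)
    (ρ : X → Y) : ∃ y : Y, #(ρ ⁻¹' {y}) = Cardinal.lift.{1} κ := by
  have hregL : (Cardinal.lift.{1} κ).IsRegular := by
    constructor
    · rw [← Cardinal.lift_aleph0.{1,0}]
      exact Cardinal.lift_le.mpr hκreg.1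
    · rw [← Cardinal.lift_ord, ← Ordinal.lift_cof]
      exact Cardinal.lift_le.mpr hκreg.2
  by_contra h
  push_neg at h
  have hlt : ∀ y : Y, #(ρ ⁻¹' {y}) < Cardinal.lift.{1} κ := fun y =>
    lt_of_le_of_ne (hX ▸ Cardinal.mk_set_le _) (h y)
  have hcover : (Set.univ : Set X) = ⋃ y : Y, ρ ⁻¹' {y} := by
    ext x; simp
  have hle : #X ≤ #Y * ⨆ y : Y, #(ρ ⁻¹' {y}) := by
    calc #X = #(⋃ y : Y, ρ ⁻¹' {y}) := by rw [← hcover, Cardinal.mk_univ]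
    _ ≤ #Y * ⨆ y : Y, #(ρ ⁻¹' {y}) := Cardinal.mk_iUnion_le _
  have hsup : (⨆ y : Y, #(ρ ⁻¹' {y})) < Cardinal.lift.{1} κ :=
    Cardinal.iSup_lt_lift_of_isRegular.{1,0} hregL (by simpa using hY) hlt
  have : #X < Cardinal.lift.{1} κ :=
    hle.trans_lt (Cardinal.mul_lt_of_lt hregL.1 hY hsup)
  exact absurd hX this.ne

theorem stmt3 (κ θ lam : Cardinal)
    (hκreg : κ.IsRegular) (hκunc : ℵ₀ < κ)
    (hθreg : θ.IsRegular)
    (h1 : Order.succ (Cardinal.powerlt lam θ) ≤ κ) (h2 : κ ≤ lam ^ θ) :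
    ∃ c : Ordinal → Ordinal → Ordinal,
      WitnessU κ κ θ 2 c ∧ ¬ WitnessU κ 2 θ 3 c := by
  classical
  -- basic facts
  have hκℵ : ℵ₀ ≤ κ := hκreg.1
  have hθℵ : ℵ₀ ≤ θ := hθreg.1
  have hθlim : Order.IsSuccLimit θ.ord := Cardinal.isSuccLimit_ord hθℵ
  have hθ0 : (0 : Ordinal) < θ.ord := hθlim.bot_lt
  -- lam ≥ 2
  have hlam2 : (2 : Cardinal) ≤ lam := by
    by_contra h
    rw [Cardinal.two_le_iff_one_lt, not_lt] at h
    have : lam ^ θ ≤ 1 := by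
      calc lam ^ θ ≤ 1 ^ θ := Cardinal.power_le_power_right h
      _ = 1 := Cardinal.one_power
    exact absurd (h2.trans this) (by simpa using (Cardinal.one_lt_aleph0.trans hκunc).not_ge)
  -- value type
  set V : Type 0 := Quotient.out lam with hVdef
  have hV : #V = lam := Cardinal.mk_out lam
  obtain ⟨v0, v1, hv01⟩ : ∃ x y : V, x ≠ y := Cardinal.two_le_iff.mp (by rw [hV]; exact hlam2)
  -- the injection E
  have hcard : #(Set.Iio κ.ord) ≤ #((Set.Iio θ.ord) → V) := by
    have harr : #((Set.Iio θ.ord) → V) = Cardinal.lift.{1} (lam ^ θ) := by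
      rw [Cardinal.mk_arrow, Ordinal.mk_Iio_ordinal, Cardinal.card_ord, hV,
        Cardinal.lift_power]
      simp
    rw [harr, Ordinal.mk_Iio_ordinal, Cardinal.card_ord]
    exact Cardinal.lift_le.mpr h2
  obtain ⟨E⟩ : Nonempty ((Set.Iio κ.ord) ↪ ((Set.Iio θ.ord) → V)) :=
    Cardinal.le_def _ _ |>.mp hcard
  -- auxiliary coloring data
  set e : Ordinal → Ordinal → V := fun α i =>
    if h : α < κ.ord ∧ i < θ.ord then E ⟨α, h.1⟩ ⟨i, h.2⟩ else v0 with hedef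
  set f : Ordinal → Ordinal → V := fun α i =>
    if i = 0 then (if α % 2 = 0 then v0 else v1) else e α (i - 1) with hfdef
  set c : Ordinal → Ordinal → Ordinal := fun α β => sInf {i | f α i ≠ f β i} with hcdef
  -- difference exists
  have hdiff : ∀ α β : Ordinal, α < κ.ord → β < κ.ord → α ≠ β →
      ∃ i, i < θ.ord ∧ f α i ≠ f β i := by
    intro α β hα hβ hne
    have hEne : E ⟨α, hα⟩ ≠ E ⟨β, hβ⟩ := fun h => hne (by simpa using congrArg Subtype.val (E.injective h))
    obtain ⟨j, hj⟩ := Function.ne_iff.mp hEne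
    refine ⟨1 + j.1, ?_, ?_⟩
    · rw [Cardinal.lt_ord, Ordinal.card_add]
      refine Cardinal.add_lt_of_lt hθℵ (lt_of_lt_of_le ?_ hθℵ) ?_
      · simpa using Cardinal.one_lt_aleph0
      · rw [← Cardinal.lt_ord]; exact j.2
    · have h10 : (1 : Ordinal) + j.1 ≠ 0 := by
        intro h
        have h1j : (1 : Ordinal) ≤ 1 + j.1 := le_self_add
        rw [h] at h1j
        exact absurd h1j (by simp)
      have hsub : (1 : Ordinal) + j.1 - 1 = j.1 := Ordinal.add_sub_cancel 1 j.1
      have hc1 : α < κ.ord ∧ j.1 < θ.ord := ⟨hα, j.2⟩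
      have hc2 : β < κ.ord ∧ j.1 < θ.ord := ⟨hβ, j.2⟩
      simp only [hfdef, if_neg h10, hsub, hedef, dif_pos hc1, dif_pos hc2]
      simpa using hj
  -- c basic facts
  have hcmem : ∀ α β : Ordinal, α < κ.ord → β < κ.ord → α ≠ β →
      f α (c α β) ≠ f β (c α β) ∧ c α β < θ.ord := by
    intro α β hα hβ hne
    obtain ⟨i, hiθ, hi⟩ := hdiff α β hα hβ hne
    have hne' : {i | f α i ≠ f β i}.Nonempty := ⟨i, hi⟩
    exact ⟨csInf_mem hne', lt_of_le_of_lt (csInf_le' hi) hiθ⟩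
  have hcmin : ∀ α β j : Ordinal, j < c α β → f α j = f β j := by
    intro α β j hj
    by_contra h
    exact absurd (csInf_le' (show j ∈ {i | f α i ≠ f β i} from h)) hj.not_ge
  -- choice of a point in a set
  set pt : Set Ordinal → Ordinal := fun a => if h : a.Nonempty then h.choose else 0 with hptdef
  have hpt : ∀ a : Set Ordinal, a.Nonempty → pt a ∈ a := by
    intro a ha
    simp only [hptdef, dif_pos ha]
    exact ha.choose_spec
  refine ⟨c, ⟨?_, ?_⟩, ?_⟩
  · -- coloring
    intro α β hαβ hβ
    exact (hcmem α β (hαβ.trans hβ) hβ hαβ.ne).2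
  · -- positive: WitnessU κ κ θ 2
    intro χ' hχ' A hA i hiθ
    obtain ⟨hA1, hA2, hA3⟩ := hA
    -- each member of A is a subsingleton
    have hsub : ∀ a ∈ A, (a : Set Ordinal).Subsingleton := by
      intro a ha
      have h1' : χ' ≤ 1 := by
        by_contra h
        rw [not_le, ← Cardinal.two_le_iff_one_lt] at h
        exact absurd hχ' h.not_gt
      have hmk := (hA1 a ha).2
      rw [HasCard] at hmk
      have : #a ≤ 1 := by
        rw [hmk]
        exact (Cardinal.lift_le.mpr h1').trans_eq Cardinal.lift_one
      exact Cardinal.mk_le_one_iff_set_subsingleton.mp this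
    -- the restriction map
    set ρ : A → ((Set.Iic i) → V) := fun a => fun j => f (pt a.1) j.1 with hρdef
    have hYcard : #((Set.Iic i) → V) < Cardinal.lift.{1} κ := by
      have harr : #((Set.Iic i) → V) = Cardinal.lift.{1} (lam ^ (Order.succ i).card) := by
        rw [Cardinal.mk_arrow, ← Order.Iio_succ, Ordinal.mk_Iio_ordinal, hV,
          Cardinal.lift_power]
        simp
      rw [harr]
      refine Cardinal.lift_lt.mpr ?_
      have hsi : (Order.succ i).card < θ := by
        rw [← Cardinal.lt_ord]
        exact hθlim.succ_lt hiθ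
      calc lam ^ (Order.succ i).card ≤ lam ^< θ := Cardinal.le_powerlt lam hsi
      _ < Order.succ (lam ^< θ) := Order.lt_succ _
      _ ≤ κ := h1
    obtain ⟨g, hg⟩ := exists_big_fiber hκreg (X := A) hA3 hYcard ρ
    refine ⟨Subtype.val '' (ρ ⁻¹' {g}), ?_, ?_, ?_⟩
    · rintro _ ⟨x, -, rfl⟩
      exact x.2
    · rw [HasCard, Cardinal.mk_image_eq_of_injOn _ _ Subtype.val_injective.injOn]
      exact hg
    · rintro _ ⟨xa, hxa, rfl⟩ _ ⟨xb, hxb, rfl⟩ hlt α hαa β hβb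
      have hαpt : α = pt xa.1 := hsub _ xa.2 hαa (hpt _ ⟨α, hαa⟩)
      have hβpt : β = pt xb.1 := hsub _ xb.2 hβb (hpt _ ⟨β, hβb⟩)
      have hαβ : α < β := hlt α hαa β hβb
      have hακ : α < κ.ord := (hA1 _ xa.2).1 hαa
      have hβκ : β < κ.ord := (hA1 _ xb.2).1 hβb
      have hkey : ∀ j, j ≤ i → f α j = f β j := by
        intro j hj
        have : ρ xa = ρ xb := by
          rw [Set.mem_preimage, Set.mem_singleton_iff] at hxa hxb
          rw [hxa, hxb]
        have := congrFun this ⟨j, hj⟩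
        simpa [hρdef, ← hαpt, ← hβpt] using this
      by_contra h
      rw [not_lt] at h
      exact (hcmem α β hακ hβκ hαβ.ne).1 (hkey _ h)
  · -- negative: ¬ WitnessU κ 2 θ 3
    rintro ⟨-, hprop⟩
    set pair : Ordinal.{0} → Set Ordinal.{0} := fun γ => {2 * γ, 2 * γ + 1} with hpairdef
    have hmono : ∀ γ δ : Ordinal, γ < δ → SetLT (pair γ) (pair δ) := by
      intro γ δ h x hx y hy
      have hxy : 2 * γ + 1 < 2 * δ := by
        have h1' : 2 * γ + 1 < 2 * γ + 2 := by
          exact add_lt_add_right (by norm_num) _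
        have h2' : 2 * γ + 2 = 2 * Order.succ γ := by
          rw [Ordinal.mul_succ]
        have h3' : 2 * Order.succ γ ≤ 2 * δ :=
          mul_le_mul_right (Order.succ_le_of_lt h) 2
        exact h1'.trans_le (h2' ▸ h3')
      have hxle : x ≤ 2 * γ + 1 := by
        rcases hx with rfl | hx
        · exact le_self_add
        · rw [Set.mem_singleton_iff] at hx
          exact hx.le
      have hyge : 2 * δ ≤ y := by
        rcases hy with rfl | hy
        · exact le_rfl
        · rw [Set.mem_singleton_iff] at hy
          rw [hy]
          exact le_self_add
      exact lt_of_le_of_lt hxle (hxy.trans_le hyge)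
    have hpar0 : ∀ γ : Ordinal, f (2 * γ) 0 = v0 := by
      intro γ
      show (if (0:Ordinal) = 0 then (if (2 * γ) % 2 = 0 then v0 else v1)
        else e (2 * γ) (0 - 1)) = v0
      rw [if_pos rfl, if_pos (Ordinal.mul_mod 2 γ)]
    have hpar1 : ∀ γ : Ordinal, f (2 * γ + 1) 0 = v1 := by
      intro γ
      have hm : (2 * γ + 1) % 2 ≠ 0 := by
        rw [Ordinal.mul_add_mod_self, Ordinal.mod_eq_of_lt (by norm_num)]
        exact one_ne_zero
      show (if (0:Ordinal) = 0 then (if (2 * γ + 1) % 2 = 0 then v0 else v1)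
        else e (2 * γ + 1) (0 - 1)) = v1
      rw [if_pos rfl, if_neg hm]
    have hbound : ∀ γ : Ordinal, γ < κ.ord → 2 * γ + 1 < κ.ord := by
      intro γ hγ
      rw [Cardinal.lt_ord, Ordinal.card_add, Ordinal.card_mul]
      have h2κ : (2 : Ordinal).card < κ := by
        simpa using (Cardinal.nat_lt_aleph0 2).trans_le hκℵ
      have h1κ : (1 : Ordinal).card < κ := by
        simpa using Cardinal.one_lt_aleph0.trans_le hκℵ
      exact Cardinal.add_lt_of_lt hκℵ
        (Cardinal.mul_lt_of_lt hκℵ h2κ (Cardinal.lt_ord.mp hγ)) h1κ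
    have hbound' : ∀ γ : Ordinal, γ < κ.ord → 2 * γ < κ.ord := by
      intro γ hγ
      exact lt_of_le_of_lt le_self_add (hbound γ hγ)
    set A : Set (Set Ordinal) := pair '' (Set.Iio κ.ord) with hAdef
    have hpairinj : Set.InjOn pair (Set.Iio κ.ord) := by
      intro γ _ δ _ h
      by_contra hne
      rcases lt_or_gt_of_ne hne with hlt | hlt
      · have hmem : 2 * γ ∈ pair δ := h ▸ Set.mem_insert _ _
        exact absurd (hmono γ δ hlt (2 * γ) (Set.mem_insert _ _) (2 * γ) hmem) (lt_irrefl _)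
      · have hmem : 2 * δ ∈ pair γ := h.symm ▸ Set.mem_insert _ _
        exact absurd (hmono δ γ hlt (2 * δ) (Set.mem_insert _ _) (2 * δ) hmem) (lt_irrefl _)
    have hfam : IsDisjFamily κ 2 A := by
      refine ⟨?_, ?_, ?_⟩
      · rintro _ ⟨γ, hγ, rfl⟩
        constructor
        · intro x hx
          rcases hx with rfl | hx
          · exact hbound' γ hγ
          · rw [Set.mem_singleton_iff] at hx
            rw [hx]; exact hbound γ hγ
        · rw [HasCard]
          have hlt1 : (2 * γ : Ordinal) < 2 * γ + 1 := by
            rw [Ordinal.add_one_eq_succ]; exact Order.lt_succ _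
          have hne2 : (2 * γ : Ordinal) ∉ ({2 * γ + 1} : Set Ordinal) := by
            simp only [Set.mem_singleton_iff]
            exact hlt1.ne
          rw [show pair γ = insert (2 * γ) {2 * γ + 1} from rfl,
            Cardinal.mk_insert hne2, Cardinal.mk_singleton]
          norm_num
      · rintro _ ⟨γ, hγ, rfl⟩ _ ⟨δ, hδ, rfl⟩ hne
        have hγδ : γ ≠ δ := fun h => hne (by rw [h])
        rw [Function.onFun, Set.disjoint_left]
        intro x hx hx'
        rcases lt_or_gt_of_ne hγδ with hlt | hlt
        · exact absurd (hmono γ δ hlt x hx x hx') (lt_irrefl _)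
        · exact absurd (hmono δ γ hlt x hx' x hx) (lt_irrefl _)
      · rw [HasCard, hAdef, Cardinal.mk_image_eq_of_injOn _ _ hpairinj,
          Ordinal.mk_Iio_ordinal, Cardinal.card_ord]
    obtain ⟨B, hBA, hB2, hhom⟩ := hprop 2 (by norm_num) A hfam 0 hθ0
    rw [HasCard] at hB2
    have hB2' : (2 : Cardinal.{1}) ≤ #B := by
      rw [hB2]; norm_num
    obtain ⟨x, y, hxy⟩ := Cardinal.two_le_iff.mp hB2'
    obtain ⟨γ, hγ, hγeq⟩ := hBA x.2
    obtain ⟨δ, hδ, hδeq⟩ := hBA y.2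
    have hγδ : γ ≠ δ := by
      intro h
      apply hxy
      apply Subtype.ext
      rw [← hγeq, ← hδeq, h]
    have key : ∀ γ' δ' : Ordinal, pair γ' ∈ B → pair δ' ∈ B → γ' < δ' → False := by
      intro γ' δ' hγB hδB hlt
      have h0 : (0 : Ordinal) < c (2 * γ') (2 * δ' + 1) :=
        hhom (pair γ') hγB (pair δ') hδB (hmono γ' δ' hlt)
          (2 * γ') (Set.mem_insert _ _)
          (2 * δ' + 1) (Set.mem_insert_of_mem _ rfl)
      have hd : f (2 * γ') 0 ≠ f (2 * δ' + 1) 0 := by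
        rw [hpar0, hpar1]; exact hv01
      have : c (2 * γ') (2 * δ' + 1) ≤ 0 := csInf_le' hd
      exact absurd h0 this.not_gt
    have hxB : pair γ ∈ B := by rw [hγeq]; exact x.2
    have hyB : pair δ ∈ B := by rw [hδeq]; exact y.2
    rcases lt_or_gt_of_ne hγδ with hlt | hlt
    · exact key γ δ hxB hyB hlt
    · exact key δ γ hyB hxB hlt
end
end

section
/- If θ < κ and c : [κ]² → θ witnesses U(κ, 2, θ, 2), then the tree T(c) := {c(·,γ)↾β : β ≤ γ < κ}, ordered by function extension, admits no cofinal branch; that is, there is no function b : κ → θ with b↾β ∈ T(c) for all β < κ. -/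
open Cardinal Set Ordinal

noncomputable section

/-- `D` is a club in (the ordinal) `o`: a closed and unbounded subset of `o`. -/
def IsClub' (D : Set Ordinal) (o : Ordinal) : Prop :=
  D ⊆ Set.Iio o ∧ (∀ α < o, ∃ β ∈ D, α ≤ β) ∧
    ∀ γ < o, 0 < γ → (∀ x < γ, ∃ β ∈ D, x < β ∧ β < γ) → γ ∈ D

/-- `S` is stationary in `o`: it meets every club in `o`. -/
def IsStationary' (S : Set Ordinal) (o : Ordinal) : Prop :=
  ∀ D, IsClub' D o → (S ∩ D).Nonempty

/-- A fast-growing sequence defined by transfinite recursion: at stage `ξ`, apply `g`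
to the least strict upper bound of all previous values. -/
noncomputable def seqAux (g : Ordinal → Ordinal) : Ordinal → Ordinal :=
  Ordinal.lt_wf.fix fun ξ ih => g (Ordinal.blsub ξ fun η h => ih η h)

theorem seqAux_def (g : Ordinal → Ordinal) (ξ : Ordinal) :
    seqAux g ξ = g (Ordinal.blsub ξ fun η _ => seqAux g η) :=
  Ordinal.lt_wf.fix_eq _ ξ

theorem stmt4 (κ θ : Cardinal) (c : Ordinal → Ordinal → Ordinal)
    (hκreg : κ.IsRegular) (hκunc : ℵ₀ < κ) (hθκ : θ < κ)
    (hc : WitnessU κ 2 θ 2 c) :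
    ¬ ∃ b : Ordinal → Ordinal, ∀ β < κ.ord, ∃ γ, β ≤ γ ∧ γ < κ.ord ∧
      ∀ α < β, b α = c α γ := by
  rintro ⟨b, hb⟩
  obtain ⟨hcol, hU⟩ := hc
  have hκlim : Order.IsSuccLimit κ.ord := Cardinal.isSuccLimit_ord hκreg.aleph0_le
  -- choose, for each β < κ.ord, an ordinal g β > β with c (·, g β) ↾ (β+1) = b ↾ (β+1)
  have hgex : ∀ β : Ordinal, ∃ γ, β < κ.ord →
      β < γ ∧ γ < κ.ord ∧ ∀ α ≤ β, b α = c α γ := by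
    intro β
    by_cases hβ : β < κ.ord
    · obtain ⟨γ, h1, h2, h3⟩ := hb (β + 1) (hκlim.succ_lt hβ)
      exact ⟨γ, fun _ => ⟨lt_of_lt_of_le (Order.lt_succ β) h1, h2,
        fun α hα => h3 α (lt_of_le_of_lt hα (Order.lt_succ β))⟩⟩
    · exact ⟨0, fun h => absurd h hβ⟩
  choose g hg using hgex
  set e : Ordinal → Ordinal := seqAux g with he
  -- basic bounds, by transfinite induction
  have main : ∀ ξ, ξ < κ.ord →
      (Ordinal.blsub ξ fun η _ => e η) < κ.ord ∧ e ξ < κ.ord := by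
    intro ξ
    induction ξ using Ordinal.induction with
    | _ ξ ih =>
      intro hξ
      have hbl : (Ordinal.blsub ξ fun η _ => e η) < κ.ord := by
        apply Ordinal.blsub_lt_ord
        · rw [hκreg.cof_eq]
          exact Cardinal.lt_ord.1 hξ
        · exact fun η hη => (ih η hη (hη.trans hξ)).2
      refine ⟨hbl, ?_⟩
      rw [he, seqAux_def]
      exact (hg _ hbl).2.1
  -- strict monotonicity of e below κ.ord
  have hmono : ∀ η ξ, η < ξ → ξ < κ.ord → e η < e ξ := by
    intro η ξ hηξ hξ
    have hbl := (main ξ hξ).1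
    calc e η < Ordinal.blsub ξ fun η _ => e η := Ordinal.lt_blsub _ η hηξ
      _ < e ξ := by rw [he, seqAux_def]; exact (hg _ hbl).1
  -- colors of pairs from the range of e are computed by b
  have hpair : ∀ η ξ, η < ξ → ξ < κ.ord → c (e η) (e ξ) = b (e η) := by
    intro η ξ hηξ hξ
    have hbl := (main ξ hξ).1
    rw [he, seqAux_def g ξ]
    exact ((hg _ hbl).2.2 _ (le_of_lt (Ordinal.lt_blsub _ η hηξ))).symm
  -- b values on the range of e are < θ.ord
  have hval : ∀ ξ, ξ < κ.ord → b (e ξ) < θ.ord := by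
    intro ξ hξ
    have hs := (main ξ hξ).2
    obtain ⟨h1, h2, h3⟩ := hg (e ξ) hs
    rw [h3 _ le_rfl]
    exact hcol _ _ h1 h2
  -- pigeonhole: some color i is attained κ-many times along e
  have hmkκ : #(Set.Iio κ.ord) = Cardinal.lift.{1} κ := by
    rw [Ordinal.mk_Iio_ordinal, Cardinal.card_ord]
  have hmkθ : #(Set.Iio θ.ord) = Cardinal.lift.{1} θ := by
    rw [Ordinal.mk_Iio_ordinal, Cardinal.card_ord]
  set f : ↥(Set.Iio κ.ord : Set Ordinal) → ↥(Set.Iio θ.ord : Set Ordinal) :=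
    fun ξ => ⟨b (e ξ.1), hval ξ.1 ξ.2⟩ with hf
  have h1 : ℵ₀ ≤ #(Set.Iio κ.ord : Set Ordinal) := by
    rw [hmkκ]
    exact Cardinal.aleph0_le_lift.2 hκreg.aleph0_le
  have h2 : #(Set.Iio θ.ord : Set Ordinal) < (#(Set.Iio κ.ord : Set Ordinal)).ord.cof := by
    rw [hmkκ, hmkθ, ← Cardinal.lift_ord, ← Ordinal.lift_cof, hκreg.cof_eq]
    exact Cardinal.lift_lt.2 hθκ
  obtain ⟨i, hi⟩ := Cardinal.infinite_pigeonhole f h1 h2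
  -- the homogeneous set X
  set X : Set Ordinal := (fun p : ↥(Set.Iio κ.ord : Set Ordinal) => e p.1) '' (f ⁻¹' {i}) with hX
  have hXmem : ∀ x ∈ X, ∃ ξ, ξ < κ.ord ∧ e ξ = x ∧ b x = i.1 := by
    rintro x ⟨⟨ξ, hξ⟩, hp, rfl⟩
    exact ⟨ξ, hξ, rfl, congrArg Subtype.val hp⟩
  have hXsub : X ⊆ Set.Iio κ.ord := by
    rintro x hx
    obtain ⟨ξ, hξ, rfl, -⟩ := hXmem x hx
    exact (main ξ hξ).2
  have hXcard : #X = Cardinal.lift.{1} κ := by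
    rw [hX, Cardinal.mk_image_eq_of_injOn, hi, hmkκ]
    intro p _ q _ hpq
    rcases lt_trichotomy p.1 q.1 with h | h | h
    · exact absurd hpq (ne_of_lt (hmono _ _ h q.2))
    · exact Subtype.ext h
    · exact absurd hpq.symm (ne_of_lt (hmono _ _ h p.2))
  -- the family of singletons from X
  set A : Set (Set Ordinal) := (fun x => ({x} : Set Ordinal)) '' X with hA
  have hAfam : IsDisjFamily κ 1 A := by
    refine ⟨?_, ?_, ?_⟩
    · rintro a ⟨x, hx, rfl⟩
      refine ⟨?_, ?_⟩
      · rintro y hy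
        rw [Set.mem_singleton_iff] at hy
        subst hy
        exact hXsub hx
      · rw [HasCard, Cardinal.mk_singleton, Cardinal.lift_one]
    · rintro a ⟨x, -, rfl⟩ b' ⟨y, -, rfl⟩ hab
      have hxy : x ≠ y := fun h => hab (by rw [h])
      simpa [Function.onFun] using Set.disjoint_singleton.2 hxy
    · rw [HasCard, hA, Cardinal.mk_image_eq Set.singleton_injective, hXcard]
  -- apply the witnessing property to get two elements of X with a large color
  obtain ⟨B, hBA, hB2, hBp⟩ := hU 1 one_lt_two A hAfam i.1 i.2
  have hB2' : (1 : Cardinal) < #B := by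
    rw [HasCard] at hB2
    rw [hB2, Cardinal.lift_two]
    exact one_lt_two
  rw [Cardinal.one_lt_iff_nontrivial] at hB2'
  obtain ⟨⟨s, hs⟩, ⟨t, ht⟩, hst⟩ := hB2'.exists_pair_ne
  have hst' : s ≠ t := fun h => hst (Subtype.ext h)
  obtain ⟨x, hxX, rfl⟩ := hBA hs
  obtain ⟨y, hyX, rfl⟩ := hBA ht
  have hxy : x ≠ y := fun h => hst' (by rw [h])
  -- the key contradiction for an ordered pair from X appearing in B
  have key : ∀ u ∈ X, ∀ v ∈ X, ({u} : Set Ordinal) ∈ B → ({v} : Set Ordinal) ∈ B →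
      u < v → False := by
    intro u huX v hvX huB hvB huv
    obtain ⟨ξ, hξ, rfl, hbu⟩ := hXmem u huX
    obtain ⟨η, hη, rfl, hbv⟩ := hXmem v hvX
    have hξη : ξ < η := by
      rcases lt_trichotomy ξ η with h | h | h
      · exact h
      · exact absurd huv (by rw [h]; exact lt_irrefl _)
      · exact absurd (hmono _ _ h hξ) (asymm huv)
    have hceq : c (e ξ) (e η) = i.1 := by rw [hpair ξ η hξη hη, hbu]
    have hlt : i.1 < c (e ξ) (e η) := by
      refine hBp _ huB _ hvB ?_ _ rfl _ rfl
      intro a ha b' hb'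
      rw [Set.mem_singleton_iff] at ha hb'
      subst ha; subst hb'
      exact huv
    rw [hceq] at hlt
    exact lt_irrefl _ hlt
  rcases hxy.lt_or_gt with h | h
  · exact key x hxX y hyX hs ht h
  · exact key y hyX x hxX ht hs h
end
end

section
/- If κ is a weakly compact cardinal, then U(κ, 2, θ, 2) fails for every infinite regular θ < κ; that is, for every coloring c : [κ]² → θ there is A ∈ [κ]^κ and i < θ such that c(α,β) ≤ i for all α < β in A. -/
open Cardinal Set Ordinal

noncomputable section

/-- `κ` is weakly compact: strongly inaccessible, and every 2-coloring of pairs of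
ordinals below `κ` admits a homogeneous set of size `κ`. -/
def IsWeaklyCompact (κ : Cardinal) : Prop :=
  κ.IsInaccessible ∧
    ∀ f : Ordinal → Ordinal → Bool, ∃ H : Set Ordinal, H ⊆ Set.Iio κ.ord ∧
      HasCard H κ ∧ ∃ b : Bool, ∀ α ∈ H, ∀ β ∈ H, α < β → f α β = b

namespace Stmt5Aux

open Classical in
/-- The auxiliary 2-coloring comparing the functions `c (·, γ)` and `c (·, γ')`
lexicographically below `γ`. -/
noncomputable def fcol (c : Ordinal → Ordinal → Ordinal) (γ γ' : Ordinal) : Bool :=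
  if (∀ δ < γ, ((∀ ξ < δ, c ξ γ = c ξ γ') ∧ c δ γ ≠ c δ γ') → c δ γ < c δ γ') then true
  else false

theorem fcol_eq_true_iff {c : Ordinal → Ordinal → Ordinal} {γ γ' : Ordinal} :
    fcol c γ γ' = true ↔
      (∀ δ < γ, ((∀ ξ < δ, c ξ γ = c ξ γ') ∧ c δ γ ≠ c δ γ') → c δ γ < c δ γ') := by
  classical
  by_cases h : (∀ δ < γ, ((∀ ξ < δ, c ξ γ = c ξ γ') ∧ c δ γ ≠ c δ γ') → c δ γ < c δ γ') <;>
    simp [fcol, h]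

/-- Convexity: between two places where the columns agree below `α`, all columns agree
below `α`, provided all three are in the homogeneous set. -/
theorem convex {c : Ordinal → Ordinal → Ordinal} {H : Set Ordinal} {b : Bool}
    (hb : ∀ x ∈ H, ∀ y ∈ H, x < y → fcol c x y = b)
    {α γ γ' γ'' : Ordinal} (h1 : γ ∈ H) (h2 : γ' ∈ H) (h3 : γ'' ∈ H)
    (l1 : γ < γ') (l2 : γ' < γ'') (hα : α ≤ γ)
    (hag : ∀ ξ < α, c ξ γ = c ξ γ'') : ∀ ξ < α, c ξ γ = c ξ γ' := by
  by_contra hcon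
  push_neg at hcon
  obtain ⟨ξ₀, hξ₀α, hξ₀ne⟩ := hcon
  set W : Set Ordinal := {ξ | ξ < α ∧ c ξ γ ≠ c ξ γ'} with hWdef
  have hWne : W.Nonempty := ⟨ξ₀, hξ₀α, hξ₀ne⟩
  set δ := Ordinal.lt_wf.min W hWne with hδdef
  have hδW : δ ∈ W := Ordinal.lt_wf.min_mem W hWne
  have hδα : δ < α := hδW.1
  have hδγ : δ < γ := lt_of_lt_of_le hδα hα
  have hlow : ∀ ξ < δ, c ξ γ = c ξ γ' := by
    intro ξ hξ
    by_contra hne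
    exact Ordinal.lt_wf.not_lt_min W (⟨hξ.trans hδα, hne⟩ : ξ ∈ W) hξ
  have hne1 : c δ γ ≠ c δ γ' := hδW.2
  have hgg'' : c δ γ = c δ γ'' := hag δ hδα
  have hlow2 : ∀ ξ < δ, c ξ γ' = c ξ γ'' := fun ξ hξ =>
    (hlow ξ hξ).symm.trans (hag ξ (hξ.trans hδα))
  have hne2 : c δ γ' ≠ c δ γ'' := fun h => hne1 (hgg''.trans h.symm)
  have e1 := hb γ h1 γ' h2 l1
  have e2 := hb γ' h2 γ'' h3 l2
  cases b with
  | true =>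
    have p1 := fcol_eq_true_iff.1 e1 δ hδγ ⟨hlow, hne1⟩
    have p2 := fcol_eq_true_iff.1 e2 δ (hδγ.trans l1) ⟨hlow2, hne2⟩
    rw [← hgg''] at p2
    exact lt_irrefl _ (p1.trans p2)
  | false =>
    have q1 : ¬ (∀ δ' < γ, ((∀ ξ < δ', c ξ γ = c ξ γ') ∧ c δ' γ ≠ c δ' γ') →
        c δ' γ < c δ' γ') := by
      intro h
      rw [fcol_eq_true_iff.2 h] at e1
      exact Bool.noConfusion e1
    push_neg at q1
    obtain ⟨δ₁, hδ₁γ, ⟨hl1, hn1⟩, hnlt1⟩ := q1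
    have hδ₁ : δ₁ = δ := by
      rcases lt_trichotomy δ₁ δ with h | h | h
      · exact absurd (hlow δ₁ h) hn1
      · exact h
      · exact absurd (hl1 δ h) hne1
    rw [hδ₁] at hnlt1
    have q2 : ¬ (∀ δ' < γ', ((∀ ξ < δ', c ξ γ' = c ξ γ'') ∧ c δ' γ' ≠ c δ' γ'') →
        c δ' γ' < c δ' γ'') := by
      intro h
      rw [fcol_eq_true_iff.2 h] at e2
      exact Bool.noConfusion e2
    push_neg at q2
    obtain ⟨δ₂, hδ₂γ, ⟨hl2, hn2⟩, hnlt2⟩ := q2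
    have hδ₂ : δ₂ = δ := by
      rcases lt_trichotomy δ₂ δ with h | h | h
      · exact absurd (hlow2 δ₂ h) hn2
      · exact h
      · exact absurd (hl2 δ h) hne2
    rw [hδ₂] at hnlt2
    have hlt1 : c δ γ' < c δ γ := lt_of_le_of_ne hnlt1 (Ne.symm hne1)
    have hlt2 : c δ γ'' < c δ γ' := lt_of_le_of_ne hnlt2 (Ne.symm hne2)
    rw [← hgg''] at hlt2
    exact lt_irrefl _ (hlt1.trans hlt2)

/-- Pigeonhole for regular cardinals in `Type 1`. -/
theorem pigeon {κ' : Cardinal.{1}} (hreg : κ'.IsRegular) {S ι : Type 1}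
    (hS : #S = κ') (hι : #ι < κ') (r : S → ι) :
    ∃ x : ι, #{s : S // r s = x} = κ' := by
  by_contra hcon
  push_neg at hcon
  have hlt : ∀ x : ι, #{s : S // r s = x} < κ' := fun x => by
    refine lt_of_le_of_ne ?_ (hcon x)
    rw [← hS]
    exact Cardinal.mk_le_of_injective
      (f := fun s : {s : S // r s = x} => s.1) fun a b h => Subtype.ext h
  have hsum := Cardinal.sum_lt_of_isRegular hreg hι hlt
  rw [← Cardinal.mk_sigma] at hsum
  rw [Cardinal.mk_congr (Equiv.sigmaFiberEquiv r), hS] at hsum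
  exact lt_irrefl _ hsum

theorem isRegular_lift {κ : Cardinal.{0}} (h : κ.IsRegular) :
    (Cardinal.lift.{1, 0} κ).IsRegular := by
  constructor
  · rw [← Cardinal.lift_aleph0.{1, 0}]
    exact Cardinal.lift_le.2 h.1
  · rw [← Cardinal.lift_ord, ← Ordinal.lift_cof]
    exact Cardinal.lift_le.2 h.2

theorem card_lt_of_subset_Iio {κ : Cardinal.{0}} {X : Set Ordinal} {ζ : Ordinal}
    (hζ : ζ < κ.ord) (hX : X ⊆ Set.Iio ζ) : #X < Cardinal.lift.{1, 0} κ :=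
  calc #X ≤ #(Set.Iio ζ) := Cardinal.mk_le_mk_of_subset hX
  _ = Cardinal.lift.{1, 0} ζ.card := Ordinal.mk_Iio_ordinal ζ
  _ < _ := Cardinal.lift_lt.2 (Cardinal.lt_ord.1 hζ)

theorem unbounded_of_card {κ : Cardinal.{0}} {X : Set Ordinal} (hX : X ⊆ Set.Iio κ.ord)
    (hcard : #X = Cardinal.lift.{1, 0} κ) : ∀ ζ < κ.ord, ∃ γ ∈ X, ζ ≤ γ := by
  intro ζ hζ
  by_contra h
  push_neg at h
  have := card_lt_of_subset_Iio hζ (fun γ hγ => h γ hγ)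
  rw [hcard] at this
  exact lt_irrefl _ this

theorem lift_le_card_of_unbounded {κ : Cardinal.{0}} (hreg : κ.IsRegular) {X : Set Ordinal}
    (hX : X ⊆ Set.Iio κ.ord) (hu : ∀ ζ < κ.ord, ∃ γ ∈ X, ζ ≤ γ) :
    Cardinal.lift.{1, 0} κ ≤ #X := by
  by_contra hcon
  push_neg at hcon
  set E := Ordinal.ToType.mk (o := κ.ord) with hE
  set Y : Set κ.ord.ToType := {x | (E.symm x : Ordinal) ∈ X} with hY
  have hequiv : X ≃ Y :=
    { toFun := fun γ => ⟨E ⟨γ.1, hX γ.2⟩, by simp [hY]⟩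
      invFun := fun y => ⟨(E.symm y.1 : Ordinal), y.2⟩
      left_inv := fun γ => by
        ext
        simp
      right_inv := fun y => by
        ext
        simp }
  have hcard : #X = Cardinal.lift.{1, 0} #Y := by
    rw [← Cardinal.lift_mk_eq'.2 ⟨hequiv⟩]
    exact (Cardinal.lift_id'.{0, 1} #X).symm
  rw [hcard, Cardinal.lift_lt] at hcon
  set f : Y → Ordinal := fun y => (E.symm y.1 : Ordinal) with hf
  have hflt : ∀ y, f y < κ.ord := fun y => (E.symm y.1).2
  have hsup : iSup f < κ.ord := by
    refine Ordinal.iSup_lt_ord ?_ hflt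
    rwa [hreg.cof_eq]
  have hlim : Order.IsSuccLimit κ.ord := Cardinal.isSuccLimit_ord hreg.1
  obtain ⟨γ, hγX, hγge⟩ := hu (Order.succ (iSup f)) (hlim.succ_lt hsup)
  have hyY : E ⟨γ, hX hγX⟩ ∈ Y := by simp [hY, hγX]
  have : f ⟨E ⟨γ, hX hγX⟩, hyY⟩ ≤ iSup f := Ordinal.le_iSup f _
  have hfeq : f ⟨E ⟨γ, hX hγX⟩, hyY⟩ = γ := by simp [hf]
  rw [hfeq] at this
  exact absurd (lt_of_lt_of_le (Order.lt_succ (iSup f)) hγge) (not_lt.2 this)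

/-- Stabilization: for each `α < κ.ord`, the columns of `c` restricted below `α`
eventually agree on the homogeneous set `H`. -/
theorem stab {κ θ : Cardinal.{0}} {c : Ordinal → Ordinal → Ordinal}
    (hreg : κ.IsRegular) (hsl : κ.IsStrongLimit) (hθκ : θ < κ)
    (hc : IsColoring κ θ c) {H : Set Ordinal} {b : Bool}
    (hH1 : H ⊆ Set.Iio κ.ord) (hH2 : #H = Cardinal.lift.{1, 0} κ)
    (hb : ∀ x ∈ H, ∀ y ∈ H, x < y → fcol c x y = b)
    {α : Ordinal} (hα : α < κ.ord) :
    ∃ m < κ.ord, ∀ γ ∈ H, ∀ γ' ∈ H, α ≤ γ → α ≤ γ' → m ≤ γ → m ≤ γ' →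
      ∀ ξ < α, c ξ γ = c ξ γ' := by
  have haleph : ℵ₀ ≤ Cardinal.lift.{1, 0} κ := by
    rw [← Cardinal.lift_aleph0.{1, 0}]
    exact Cardinal.lift_le.2 hreg.1
  set S : Set Ordinal := {γ | γ ∈ H ∧ α ≤ γ} with hSdef
  have hSsub : S ⊆ H := fun γ h => h.1
  have hScard : #S = Cardinal.lift.{1, 0} κ := by
    refine le_antisymm (hH2 ▸ Cardinal.mk_le_mk_of_subset hSsub) ?_
    by_contra hcon
    push_neg at hcon
    have hsplit : H ⊆ (H ∩ Set.Iio α) ∪ S := by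
      intro γ hγ
      rcases lt_or_ge γ α with h | h
      · exact Or.inl ⟨hγ, h⟩
      · exact Or.inr ⟨hγ, h⟩
    have h1 : #(H ∩ Set.Iio α : Set Ordinal) < Cardinal.lift.{1, 0} κ :=
      card_lt_of_subset_Iio hα (fun γ hγ => hγ.2)
    have := calc
      Cardinal.lift.{1, 0} κ = #H := hH2.symm
      _ ≤ #((H ∩ Set.Iio α) ∪ S : Set Ordinal) := Cardinal.mk_le_mk_of_subset hsplit
      _ ≤ #(H ∩ Set.Iio α : Set Ordinal) + #S := Cardinal.mk_union_le _ _
      _ < Cardinal.lift.{1, 0} κ := Cardinal.add_lt_of_lt haleph h1 hcon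
    exact lt_irrefl _ this
  -- the coloring of columns
  set r : S → (Set.Iio α → Set.Iio θ.ord) := fun γ ξ =>
    ⟨c ξ.1 γ.1, hc ξ.1 γ.1 (lt_of_lt_of_le ξ.2 γ.2.2) (hH1 γ.2.1)⟩ with hrdef
  have hcod : #(Set.Iio α → Set.Iio θ.ord) < Cardinal.lift.{1, 0} κ := by
    have hpow : θ ^ α.card < κ := by
      have h1 : θ ^ α.card ≤ (2 ^ θ) ^ α.card :=
        Cardinal.power_le_power_right (Cardinal.cantor θ).le
      rw [← Cardinal.power_mul] at h1
      have h2 : θ * α.card < κ :=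
        Cardinal.mul_lt_of_lt hreg.1 hθκ (Cardinal.lt_ord.1 hα)
      exact lt_of_le_of_lt h1 (hsl.two_power_lt h2)
    calc #(Set.Iio α → Set.Iio θ.ord)
        = #(Set.Iio θ.ord) ^ #(Set.Iio α) := (Cardinal.power_def _ _).symm
      _ = Cardinal.lift.{1, 0} (θ ^ α.card) := by
          rw [Ordinal.mk_Iio_ordinal, Ordinal.mk_Iio_ordinal, Cardinal.card_ord,
            Cardinal.lift_power]
      _ < Cardinal.lift.{1, 0} κ := Cardinal.lift_lt.2 hpow
  obtain ⟨x, hx⟩ := pigeon (isRegular_lift hreg) hScard hcod r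
  set G : Set Ordinal := (fun s : S => (s : Ordinal)) '' {s | r s = x} with hGdef
  have hGcard : #G = Cardinal.lift.{1, 0} κ := by
    rw [Cardinal.mk_image_eq Subtype.val_injective]
    exact hx
  have hGS : G ⊆ S := by
    rintro γ ⟨s, _, rfl⟩
    exact s.2
  have hGIio : G ⊆ Set.Iio κ.ord := fun γ hγ => hH1 (hGS hγ).1
  have hGr : ∀ γ ∈ G, ∀ γ' ∈ G, ∀ ξ < α, c ξ γ = c ξ γ' := by
    rintro γ ⟨s, hs, rfl⟩ γ' ⟨s', hs', rfl⟩ ξ hξ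
    have : r s = r s' := hs.trans hs'.symm
    have := congrFun this ⟨ξ, hξ⟩
    exact Subtype.ext_iff.1 this
  have hGunb := unbounded_of_card hGIio hGcard
  have hlim : Order.IsSuccLimit κ.ord := Cardinal.isSuccLimit_ord hreg.1
  obtain ⟨g₀, hg₀G, _⟩ := hGunb 0 hlim.pos
  have key : ∀ γ ∈ S, g₀ ≤ γ → ∀ ξ < α, c ξ g₀ = c ξ γ := by
    intro γ hγS hg₀γ ξ hξ
    rcases eq_or_lt_of_le hg₀γ with h | h
    · rw [h]
    · obtain ⟨g₁, hg₁G, hg₁ge⟩ := hGunb (Order.succ γ) (hlim.succ_lt (hH1 hγS.1))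
      have hγg₁ : γ < g₁ := lt_of_lt_of_le (Order.lt_succ γ) hg₁ge
      exact convex hb (hGS hg₀G).1 hγS.1 (hGS hg₁G).1 h hγg₁ (hGS hg₀G).2
        (hGr g₀ hg₀G g₁ hg₁G) ξ hξ
  refine ⟨g₀, hGIio hg₀G, ?_⟩
  intro γ hγ γ' hγ' hαγ hαγ' hmγ hmγ' ξ hξ
  have e1 := key γ ⟨hγ, hαγ⟩ hmγ ξ hξ
  have e2 := key γ' ⟨hγ', hαγ'⟩ hmγ' ξ hξ
  rw [← e1, ← e2]

end Stmt5Aux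

open Stmt5Aux in
theorem stmt5 (κ θ : Cardinal) (hκ : IsWeaklyCompact κ)
    (hθreg : θ.IsRegular) (hθκ : θ < κ)
    (c : Ordinal → Ordinal → Ordinal) (hc : IsColoring κ θ c) :
    ∃ A ⊆ Set.Iio κ.ord, HasCard A κ ∧ ∃ i < θ.ord,
      ∀ α ∈ A, ∀ β ∈ A, α < β → c α β ≤ i := by
  obtain ⟨hI, hwc⟩ := hκ
  have h0 := hI.aleph0_lt
  have hreg := hI.isRegular
  have hsl := hI.isStrongLimit
  obtain ⟨H, hH1, hH2, b, hb⟩ := hwc (fcol c)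
  have hH2' : #H = Cardinal.lift.{1, 0} κ := hH2
  have hlim : Order.IsSuccLimit κ.ord := Cardinal.isSuccLimit_ord hreg.1
  have hHu := unbounded_of_card hH1 hH2'
  -- stabilization bounds
  have hstab := fun (α : Ordinal) (hα : α < κ.ord) =>
    stab hreg hsl hθκ hc hH1 hH2' hb hα
  choose! m hm1 hm2 using hstab
  -- stable witnesses
  have hw : ∀ ξ, ξ < κ.ord → ∃ γ, γ ∈ H ∧ max (m (Order.succ ξ)) (Order.succ ξ) ≤ γ := by
    intro ξ hξ
    exact hHu _ (max_lt (hm1 _ (hlim.succ_lt hξ)) (hlim.succ_lt hξ))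
  choose! w hw1 hw2 using hw
  set v : Ordinal → Ordinal := fun ξ => c ξ (w ξ) with hvdef
  have hwgt : ∀ ξ < κ.ord, ξ < w ξ := fun ξ hξ =>
    lt_of_lt_of_le (Order.lt_succ ξ) (le_trans (le_max_right _ _) (hw2 ξ hξ))
  have hvθ : ∀ ξ < κ.ord, v ξ < θ.ord := fun ξ hξ =>
    hc ξ (w ξ) (hwgt ξ hξ) (hH1 (hw1 ξ hξ))
  have hstable : ∀ ξ < κ.ord, ∀ γ ∈ H, m (Order.succ ξ) ≤ γ → Order.succ ξ ≤ γ →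
      c ξ γ = v ξ := by
    intro ξ hξ γ hγ hmγ hsγ
    exact hm2 (Order.succ ξ) (hlim.succ_lt hξ) γ hγ (w ξ) (hw1 ξ hξ) hsγ
      (le_trans (le_max_right _ _) (hw2 ξ hξ)) hmγ
      (le_trans (le_max_left _ _) (hw2 ξ hξ)) ξ (Order.lt_succ ξ)
  -- closing function
  set g : Ordinal → Ordinal := fun x => max (m (Order.succ x)) (Order.succ x) with hgdef
  have hg : ∀ x < κ.ord, g x < κ.ord := fun x hx =>
    max_lt (hm1 _ (hlim.succ_lt hx)) (hlim.succ_lt hx)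
  set G : Ordinal → Ordinal := fun x =>
    max (Ordinal.bsup x (fun β _ => g β)) (Order.succ x) with hGdef
  have hG : ∀ x < κ.ord, G x < κ.ord := by
    intro x hx
    refine max_lt (Ordinal.bsup_lt_ord ?_ (fun i hi => hg i (hi.trans hx))) (hlim.succ_lt hx)
    rw [hreg.cof_eq]
    exact Cardinal.lt_ord.1 hx
  have hGgt : ∀ x, x < G x := fun x => lt_of_lt_of_le (Order.lt_succ x) (le_max_right _ _)
  have Dunb : ∀ ζ < κ.ord, ∃ δ, ζ < δ ∧ δ < κ.ord ∧ ∀ x < δ, g x < δ := by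
    intro ζ hζ
    set t : ℕ → Ordinal := fun n => G^[n] (Order.succ ζ) with htdef
    have htsucc : ∀ n, t (n + 1) = G (t n) := fun n => Function.iterate_succ_apply' G n _
    have htlt : ∀ n, t n < κ.ord := by
      intro n
      induction n with
      | zero => exact hlim.succ_lt hζ
      | succ n ih => rw [htsucc]; exact hG _ ih
    have htmono : ∀ n, t n < t (n + 1) := fun n => by rw [htsucc]; exact hGgt _
    set δ := ⨆ n, t n with hδdef
    have hδκ : δ < κ.ord := by
      refine Ordinal.iSup_lt_ord ?_ htlt
      rw [Cardinal.mk_nat, hreg.cof_eq]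
      exact h0
    have hle : ∀ n, t n ≤ δ := Ordinal.le_iSup t
    refine ⟨δ, lt_of_lt_of_le (Order.lt_succ ζ) (hle 0), hδκ, ?_⟩
    intro x hx
    have hex : ∃ n, x < t n := by
      by_contra hcc
      push_neg at hcc
      exact absurd (Ordinal.iSup_le hcc : δ ≤ x) (not_le.2 hx)
    obtain ⟨n, hn⟩ := hex
    have h1 : g x ≤ Ordinal.bsup (t n) (fun β _ => g β) := Ordinal.le_bsup _ x hn
    have h2 : g x ≤ t (n + 1) := h1.trans (by rw [htsucc]; exact le_max_left _ _)
    exact lt_of_lt_of_le (h2.trans_lt (htmono (n + 1))) (hle (n + 2))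
  -- least elements of H above δ
  have hmin : ∀ δ, δ < κ.ord → ∃ γ, (γ ∈ H ∧ δ ≤ γ) ∧
      ∀ γ'', (γ'' ∈ H ∧ δ ≤ γ'') → γ ≤ γ'' := by
    intro δ hδ
    obtain ⟨γ₀, hγ₀⟩ := hHu δ hδ
    have hne : {γ | γ ∈ H ∧ δ ≤ γ}.Nonempty := ⟨γ₀, hγ₀⟩
    exact ⟨Ordinal.lt_wf.min _ hne, Ordinal.lt_wf.min_mem _ hne,
      fun γ'' h => not_lt.1 (Ordinal.lt_wf.not_lt_min _ h)⟩
  choose! mh hmh1 hmh2 using hmin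
  set A₀ : Set Ordinal := {γ | ∃ δ, (δ < κ.ord ∧ ∀ x < δ, g x < δ) ∧ γ = mh δ} with hA₀def
  have hA₀H : A₀ ⊆ H := by
    rintro γ ⟨δ, ⟨hδ, _⟩, rfl⟩
    exact (hmh1 δ hδ).1
  have hA₀Iio : A₀ ⊆ Set.Iio κ.ord := fun γ hγ => hH1 (hA₀H hγ)
  have hA₀unb : ∀ ζ < κ.ord, ∃ γ ∈ A₀, ζ ≤ γ := by
    intro ζ hζ
    obtain ⟨δ, hζδ, hδκ, hδcl⟩ := Dunb ζ hζ
    exact ⟨mh δ, ⟨δ, ⟨hδκ, hδcl⟩, rfl⟩, le_trans hζδ.le (hmh1 δ hδκ).2⟩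
  have hA₀card : #A₀ = Cardinal.lift.{1, 0} κ := by
    refine le_antisymm ?_ (lift_le_card_of_unbounded hreg hA₀Iio hA₀unb)
    calc #A₀ ≤ #(Set.Iio κ.ord) := Cardinal.mk_le_mk_of_subset hA₀Iio
      _ = Cardinal.lift.{1, 0} κ.ord.card := Ordinal.mk_Iio_ordinal _
      _ = Cardinal.lift.{1, 0} κ := by rw [Cardinal.card_ord]
  have hpair : ∀ γ ∈ A₀, ∀ γ' ∈ A₀, γ < γ' → c γ γ' = v γ := by
    intro γ hγ γ' hγ' hlt
    have hγ'H : γ' ∈ H := hA₀H hγ'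
    obtain ⟨δ', ⟨hδ'κ, hδ'cl⟩, hγ'eq⟩ := hγ'
    have hγH : γ ∈ H := hA₀H hγ
    have hγδ' : γ < δ' := by
      by_contra hle
      push_neg at hle
      have := hmh2 δ' hδ'κ γ ⟨hγH, hle⟩
      rw [← hγ'eq] at this
      exact absurd hlt (not_lt.2 this)
    have hgγ : g γ < δ' := hδ'cl γ hγδ'
    have hδ'γ' : δ' ≤ γ' := hγ'eq ▸ (hmh1 δ' hδ'κ).2
    have h1 : m (Order.succ γ) ≤ γ' := le_trans (le_trans (le_max_left _ _) hgγ.le) hδ'γ'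
    have h2 : Order.succ γ ≤ γ' := le_trans (le_trans (le_max_right _ _) hgγ.le) hδ'γ'
    exact hstable γ (hH1 hγH) γ' hγ'H h1 h2
  -- second pigeonhole on the stable values
  set r2 : A₀ → Set.Iio θ.ord := fun γ => ⟨v γ.1, hvθ γ.1 (hA₀Iio γ.2)⟩ with hr2def
  have hθcard : #(Set.Iio θ.ord) < Cardinal.lift.{1, 0} κ := by
    rw [Ordinal.mk_Iio_ordinal, Cardinal.card_ord]
    exact Cardinal.lift_lt.2 hθκ
  obtain ⟨x, hx⟩ := pigeon (isRegular_lift hreg) hA₀card hθcard r2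
  set A : Set Ordinal := (fun s : A₀ => (s : Ordinal)) '' {s | r2 s = x} with hAdef
  have hAA₀ : A ⊆ A₀ := by
    rintro γ ⟨s, _, rfl⟩
    exact s.2
  have hAv : ∀ γ ∈ A, v γ = x.1 := by
    rintro γ ⟨s, hs, rfl⟩
    exact Subtype.ext_iff.1 hs
  refine ⟨A, fun γ hγ => hA₀Iio (hAA₀ hγ), ?_, x.1, x.2, ?_⟩
  · show #A = Cardinal.lift.{1, 0} κ
    rw [Cardinal.mk_image_eq Subtype.val_injective]
    exact hx
  · intro γ hγ γ' hγ' hlt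
    rw [hpair γ (hAA₀ hγ) γ' (hAA₀ hγ') hlt, hAv γ hγ]
end
end

section
/- Suppose λ is a singular limit of strongly compact cardinals and θ is an infinite regular cardinal below λ with θ ≠ cf(λ). Then U(λ⁺, 2, θ, cf(λ)⁺) fails: for every coloring c : [λ⁺]² → θ there exist i < θ and a family A of λ⁺-many pairwise disjoint subsets of λ⁺ each of size ≤ cf(λ), such that min(c[a × b]) ≤ i for every pair a < b from A. -/
open Cardinal Set Ordinal Order

noncomputable section

/-- `D` is a club in (the ordinal) `o`: a closed and unbounded subset of `o`. -/
def OrdIsClub (D : Set Ordinal) (o : Ordinal) : Prop :=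
  D ⊆ Set.Iio o ∧ (∀ α < o, ∃ β ∈ D, α ≤ β) ∧
    ∀ γ < o, 0 < γ → (∀ x < γ, ∃ β ∈ D, x < β ∧ β < γ) → γ ∈ D

/-- `S` is stationary in `o`: it meets every club in `o`. -/
def OrdIsStationary (S : Set Ordinal) (o : Ordinal) : Prop :=
  ∀ D, OrdIsClub D o → (S ∩ D).Nonempty

/-- `F` is a `ν`-complete filter: it is closed under intersections of fewer than
`ν`-many of its members. -/
def IsCompleteFilter (ν : Cardinal) {α : Type} (F : Filter α) : Prop :=
  ∀ S : Set (Set α), Cardinal.mk S < ν → (∀ s ∈ S, s ∈ F) → ⋂₀ S ∈ F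

/-- `ν` is strongly compact: it is uncountable and every `ν`-complete (proper) filter
extends to a `ν`-complete ultrafilter. -/
def IsStronglyCompact (ν : Cardinal) : Prop :=
  ℵ₀ < ν ∧ ∀ (α : Type) (F : Filter α), F.NeBot → IsCompleteFilter ν F →
    ∃ Uf : Ultrafilter α, (Uf : Filter α) ≤ F ∧ IsCompleteFilter ν (Uf : Filter α)

open Filter

lemma uf_partition {α : Type} (U : Ultrafilter α) {ν : Cardinal}
    (hU : IsCompleteFilter ν (U : Filter α)) {ι : Type} (hι : #ι < ν)
    (D : ι → Set α) (W : Set α) (hW : W ∈ U) (hcov : W ⊆ ⋃ t, D t) :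
    ∃ t, D t ∈ U := by
  by_contra h
  push_neg at h
  have hcomp : ∀ t, (D t)ᶜ ∈ U := fun t => Ultrafilter.compl_mem_iff_notMem.2 (h t)
  have hint : ⋂₀ (Set.range fun t => (D t)ᶜ) ∈ U := by
    refine hU _ (lt_of_le_of_lt Cardinal.mk_range_le hι) ?_
    rintro s ⟨t, rfl⟩; exact hcomp t
  obtain ⟨x, hxW, hx2⟩ := Ultrafilter.nonempty_of_mem (Filter.inter_mem hW hint)
  obtain ⟨t, hxt⟩ := Set.mem_iUnion.1 (hcov hxW)
  exact hx2 _ ⟨t, rfl⟩ hxt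

lemma bound_toType {o : Ordinal.{0}} (ho : IsSuccLimit o) (W : Set o.ToType) (hW : #W < o.cof) :
    ∃ b : o.ToType, ∀ x ∈ W, x < b := by
  haveI : IsWellOrder o.ToType (· < ·) := isWellOrder_lt
  have hf : ∀ x : W, typein (α := o.ToType) (· < ·) x.1 < o := fun x => by
    simpa [type_toType] using typein_lt_type (α := o.ToType) (· < ·) x.1
  have hs : (⨆ x : W, typein (α := o.ToType) (· < ·) x.1) < o := iSup_lt_ord hW hf
  have h1 : (⨆ x : W, typein (α := o.ToType) (· < ·) x.1) + 1 < o := by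
    have := ho.succ_lt hs
    simpa [Order.succ] using this
  refine ⟨enum (α := o.ToType) (· < ·) ⟨_, by rw [type_toType]; exact h1⟩, ?_⟩
  intro x hx
  have h2 : typein (α := o.ToType) (· < ·) x <
      typein (α := o.ToType) (· < ·) (enum (α := o.ToType) (· < ·) ⟨_, by rw [type_toType]; exact h1⟩) := by
    erw [typein_enum]
    exact lt_of_le_of_lt (le_ciSup (Ordinal.bddAbove_range _) (⟨x, hx⟩ : W)) (lt_add_one _)
  exact (typein_lt_typein (α := o.ToType) (· < ·)).1 h2

lemma rec_exists {γ : Type} (O : Ordinal) (P : Set γ → Prop) (R : Set γ → Set γ → Prop)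
    (step : ∀ η < O, ∀ g : Ordinal → Set γ, (∀ ξ < η, P (g ξ)) →
      ∃ s, P s ∧ ∀ ξ < η, R (g ξ) s) :
    ∃ G : Ordinal → Set γ, ∀ η < O, P (G η) ∧ ∀ ξ < η, R (G ξ) (G η) := by
  classical
  let F : (η : Ordinal) → ((ξ : Ordinal) → ξ < η → Set γ) → Set γ := fun η rec =>
    if h : η < O ∧ ∀ ξ < η, P (if hξ : ξ < η then rec ξ hξ else ∅) then
      (step η h.1 (fun ξ => if hξ : ξ < η then rec ξ hξ else ∅) h.2).choose
    else ∅
  let G : Ordinal → Set γ := lt_wf.fix F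
  have hGeq : ∀ η, G η = F η (fun ξ _ => G ξ) := fun η => lt_wf.fix_eq F η
  refine ⟨G, ?_⟩
  intro η
  induction η using Ordinal.induction with
  | h η IH =>
    intro hη
    have hg : ∀ ξ < η, P (if hξ : ξ < η then G ξ else ∅) := by
      intro ξ hξ; rw [dif_pos hξ]; exact (IH ξ hξ (hξ.trans hη)).1
    have hcond : η < O ∧ ∀ ξ < η, P (if hξ : ξ < η then G ξ else ∅) := ⟨hη, hg⟩
    have hGη : G η = (step η hη (fun ξ => if hξ : ξ < η then G ξ else ∅) hg).choose := by
      rw [hGeq η]; simp only [F, dif_pos hcond]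
    have hspec := (step η hη (fun ξ => if hξ : ξ < η then G ξ else ∅) hg).choose_spec
    rw [← hGη] at hspec
    refine ⟨hspec.1, fun ξ hξ => ?_⟩
    have := hspec.2 ξ hξ
    rwa [dif_pos hξ] at this

theorem stmt6 (lam θ : Cardinal)
    (hinf : ℵ₀ ≤ lam) (hsing : lam.ord.cof < lam)
    (hlim : ∀ μ < lam, ∃ ν, μ < ν ∧ ν < lam ∧ IsStronglyCompact ν)
    (hθreg : θ.IsRegular) (hθlt : θ < lam) (hθcf : θ ≠ lam.ord.cof)
    (c : Ordinal → Ordinal → Ordinal) (hc : IsColoring (Order.succ lam) θ c) :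
    ∃ i < θ.ord, ∃ A : Set (Set Ordinal),
      (∀ a ∈ A, a ⊆ Set.Iio (Order.succ lam).ord ∧ a.Nonempty ∧
        Cardinal.mk a ≤ Cardinal.lift.{1, 0} lam.ord.cof) ∧
      A.PairwiseDisjoint id ∧ HasCard A (Order.succ lam) ∧
      ∀ a ∈ A, ∀ b ∈ A, SetLT a b → ∃ α ∈ a, ∃ β ∈ b, c α β ≤ i := by
  classical
  -- basic notation
  set κ : Cardinal := Order.succ lam with hκdef
  set O : Ordinal := κ.ord with hOdef
  set χ : Cardinal := lam.ord.cof with hχdef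
  have hκreg : κ.IsRegular := isRegular_succ hinf
  have hκinf : ℵ₀ ≤ κ := hκreg.aleph0_le
  have hlamκ : lam < κ := Order.lt_succ_of_not_isMax (not_isMax lam)
  have hOlim : IsSuccLimit O := isSuccLimit_ord hκinf
  have hOcof : O.cof = κ := hκreg.cof_eq
  have hχreg : χ.IsRegular := isRegular_cof (isSuccLimit_ord hinf)
  have hχlam : χ < lam := hsing
  have hLlim : IsSuccLimit lam.ord := isSuccLimit_ord hinf
  haveI : Nonempty O.ToType := nonempty_toType_iff.2 hOlim.ne_bot
  haveI : Nonempty lam.ord.ToType := nonempty_toType_iff.2 hLlim.ne_bot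
  -- rank functions
  obtain ⟨φ, hφlt, hφmono⟩ :
      ∃ φ : O.ToType → Ordinal, (∀ x, φ x < O) ∧ (∀ x y, x < y ↔ φ x < φ y) := by
    haveI : IsWellOrder O.ToType (· < ·) := isWellOrder_lt
    refine ⟨typein (· < ·), fun x => ?_, fun x y => (typein_lt_typein _).symm⟩
    simpa [type_toType] using typein_lt_type (α := O.ToType) (· < ·) x
  have hφinj : Function.Injective φ := by
    intro x y h
    rcases lt_trichotomy x y with h' | h' | h'
    · exact absurd ((hφmono x y).1 h') (h ▸ lt_irrefl _)
    · exact h'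
    · exact absurd ((hφmono y x).1 h') (h ▸ lt_irrefl _)
  obtain ⟨ρ, hρlt, hρcard⟩ :
      ∃ ρ : lam.ord.ToType → Ordinal, (∀ j, ρ j < lam.ord) ∧
        (∀ j, #{b : lam.ord.ToType // b < j} = (ρ j).card) := by
    haveI : IsWellOrder lam.ord.ToType (· < ·) := isWellOrder_lt
    refine ⟨typein (· < ·), fun j => ?_, fun j => card_typein _⟩
    simpa [type_toType] using typein_lt_type (α := lam.ord.ToType) (· < ·) j
  obtain ⟨τ, hτlt, hτsurj⟩ :
      ∃ τ : θ.ord.ToType → Ordinal, (∀ t, τ t < θ.ord) ∧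
        (∀ p, p < θ.ord → ∃ t, τ t = p) := by
    haveI : IsWellOrder θ.ord.ToType (· < ·) := isWellOrder_lt
    refine ⟨typein (· < ·), fun t => ?_, fun p hp => typein_surj _ (by rwa [type_toType])⟩
    simpa [type_toType] using typein_lt_type (α := θ.ord.ToType) (· < ·) t
  have hτcard : #θ.ord.ToType = θ := by rw [mk_toType, card_ord]
  -- bounding in O.ToType
  have hbound : ∀ W : Set O.ToType, #W < κ → ∃ b : O.ToType, ∀ x ∈ W, x < b := by
    intro W hW
    exact bound_toType hOlim W (by rwa [hOcof])
  have hIoi : ∀ x : O.ToType, {y | x < y} ∈ (atTop : Filter O.ToType) := by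
    intro x
    obtain ⟨b, hb⟩ := hbound {x} ((mk_singleton x).trans_lt (one_lt_aleph0.trans_le hκinf))
    exact Filter.mem_of_superset (Filter.Ici_mem_atTop b)
      (fun y hy => lt_of_lt_of_le (hb x rfl) hy)
  -- completeness of atTop
  have hatTopC : ∀ ν' ≤ κ, IsCompleteFilter ν' (atTop : Filter O.ToType) := by
    intro ν' hν' S hS hmem
    have hx : ∀ s : S, ∃ a : O.ToType, ∀ b ≥ a, b ∈ s.1 :=
      fun s => Filter.mem_atTop_sets.1 (hmem s.1 s.2)
    choose x hx using hx
    obtain ⟨b, hb⟩ := hbound (Set.range x) (Cardinal.mk_range_le.trans_lt (hS.trans_le hν'))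
    refine Filter.mem_atTop_sets.2 ⟨b, fun y hy => Set.mem_sInter.2 fun s hs => ?_⟩
    exact hx ⟨s, hs⟩ y (((hb _ (Set.mem_range_self _)).le).trans hy)
  -- ultrafilters
  have hdata : ∀ j : lam.ord.ToType, ∃ (ν : Cardinal) (Uf : Ultrafilter O.ToType),
      (ρ j).card < ν ∧ θ < ν ∧ χ < ν ∧ ν < lam ∧
      (Uf : Filter O.ToType) ≤ atTop ∧ IsCompleteFilter ν (Uf : Filter O.ToType) := by
    intro j
    have hm : max ((ρ j).card) (max θ χ) < lam :=
      max_lt (Cardinal.lt_ord.1 (hρlt j)) (max_lt hθlt hχlam)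
    obtain ⟨ν, hm1, hm2, hsc⟩ := hlim _ hm
    obtain ⟨Uf, hle, hcom⟩ := hsc.2 O.ToType atTop Filter.atTop_neBot
      (hatTopC ν (hm2.le.trans hlamκ.le))
    exact ⟨ν, Uf, (le_max_left _ _).trans_lt hm1,
      ((le_max_left _ _).trans (le_max_right _ _)).trans_lt hm1,
      ((le_max_right _ _).trans (le_max_right _ _)).trans_lt hm1, hm2, hle, hcom⟩
  choose ν Uf hν1 hν2 hν3 hν4 hUfle hUfc using hdata
  -- local colors
  have hiloc : ∀ (j : lam.ord.ToType) (x : O.ToType),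
      ∃ i', i' < θ.ord ∧ {y | x < y ∧ c (φ x) (φ y) = i'} ∈ Uf j := by
    intro j x
    have hcov : {y : O.ToType | x < y} ⊆ ⋃ t, {y | x < y ∧ c (φ x) (φ y) = τ t} := by
      intro y hy
      obtain ⟨t, ht⟩ := hτsurj _ (hc (φ x) (φ y) ((hφmono x y).1 hy) (hφlt y))
      exact Set.mem_iUnion.2 ⟨t, hy, ht.symm⟩
    obtain ⟨t, ht⟩ := uf_partition (Uf j) (hUfc j) (by rw [hτcard]; exact hν2 j)
      (fun t => {y | x < y ∧ c (φ x) (φ y) = τ t}) {y | x < y} (hUfle j (hIoi x)) hcov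
    exact ⟨τ t, hτlt t, ht⟩
  choose iloc hiloc1 hiloc2 using hiloc
  -- uniform color per ultrafilter
  have histar : ∀ j : lam.ord.ToType, ∃ i', i' < θ.ord ∧ {x | iloc j x = i'} ∈ Uf j := by
    intro j
    have hcov : (Set.univ : Set O.ToType) ⊆ ⋃ t, {x | iloc j x = τ t} := by
      intro x _
      obtain ⟨t, ht⟩ := hτsurj _ (hiloc1 j x)
      exact Set.mem_iUnion.2 ⟨t, ht.symm⟩
    obtain ⟨t, ht⟩ := uf_partition (Uf j) (hUfc j) (by rw [hτcard]; exact hν2 j)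
      (fun t => {x | iloc j x = τ t}) Set.univ Filter.univ_mem hcov
    exact ⟨τ t, hτlt t, ht⟩
  choose istar histar1 histar2 using histar
  -- cofinal set
  obtain ⟨C, hCub, hCcard⟩ : ∃ C : Set lam.ord.ToType,
      (∀ a, ∃ b ∈ C, a < b) ∧ #C = χ := by
    haveI : IsWellOrder lam.ord.ToType (· < ·) := isWellOrder_lt
    obtain ⟨C, h1, h2⟩ := Ordinal.cof_eq' ((· < ·) : lam.ord.ToType → lam.ord.ToType → Prop)
      (by rw [type_toType]; exact hLlim)
    rw [type_toType] at h2
    exact ⟨C, h1, h2⟩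
  -- key selection of color bound i and cofinal index set J
  obtain ⟨i, hi, J, hJub, hJcard, histarle⟩ :
      ∃ i, i < θ.ord ∧ ∃ J : Set lam.ord.ToType,
        (∀ a, ∃ b ∈ J, a < b) ∧ #J ≤ χ ∧ ∀ j ∈ J, istar j ≤ i := by
    rcases hθcf.lt_or_gt with hlt | hgt
    · -- θ < χ
      have hum : ∃ t : θ.ord.ToType, ∀ a, ∃ b ∈ C, a < b ∧ istar b = τ t := by
        by_contra h
        push_neg at h
        choose bnd hbnd using h
        obtain ⟨b0, hb0⟩ := bound_toType hLlim (Set.range bnd)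
          (Cardinal.mk_range_le.trans_lt (by rw [hτcard]; exact hlt))
        obtain ⟨b, hbC, hb⟩ := hCub b0
        obtain ⟨t, ht⟩ := hτsurj _ (histar1 b)
        exact hbnd t b hbC ((hb0 (bnd t) ⟨t, rfl⟩).trans hb) ht.symm
      obtain ⟨t, ht⟩ := hum
      refine ⟨τ t, hτlt t, {j ∈ C | istar j = τ t}, ?_, ?_, ?_⟩
      · intro a
        obtain ⟨b, hbC, hab, hbt⟩ := ht a
        exact ⟨b, ⟨hbC, hbt⟩, hab⟩
      · exact (Cardinal.mk_le_mk_of_subset (fun x hx => hx.1)).trans hCcard.le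
      · intro j hj; exact hj.2.le
    · -- χ < θ
      refine ⟨⨆ j : C, istar j.1, ?_, C, hCub, hCcard.le, ?_⟩
      · exact iSup_lt_ord (by rw [hCcard, hθreg.cof_eq]; exact hgt) fun j => histar1 j.1
      · intro j hj
        exact le_ciSup (Ordinal.bddAbove_range _) (⟨j, hj⟩ : C)
  -- the key large sets
  set T : lam.ord.ToType → Set O.ToType := fun j => {x | iloc j x = istar j} with hTdef
  have hTmem : ∀ j, T j ∈ Uf j := fun j => histar2 j
  have hT2 : ∀ j ∈ J, ∀ x ∈ T j, {y | x < y ∧ c (φ x) (φ y) ≤ i} ∈ Uf j := by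
    intro j hj x hx
    refine Filter.mem_of_superset (hiloc2 j x) ?_
    intro y hy
    exact ⟨hy.1, hy.2.le.trans (hx ▸ histarle j hj : iloc j x ≤ i)⟩
  -- the recursion step
  have step : ∀ η < O, ∀ g : Ordinal → Set O.ToType,
      (∀ ξ < η, (g ξ).Nonempty ∧ #↑(g ξ) ≤ χ ∧ ∀ j ∈ J, ∃ x ∈ g ξ, x ∈ T j) →
      ∃ s : Set O.ToType,
        (s.Nonempty ∧ #↑s ≤ χ ∧ ∀ j ∈ J, ∃ x ∈ s, x ∈ T j) ∧
        ∀ ξ < η, (∀ x ∈ g ξ, ∀ y ∈ s, x < y) ∧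
          (∃ x ∈ g ξ, ∃ y ∈ s, x < y ∧ c (φ x) (φ y) ≤ i) := by
    intro η hη g hg
    -- bound all previously used elements
    set Z : Set O.ToType := ⋃ ξ : ↑(Set.Iio η), g ξ.1 with hZdef
    have hZcard : #↑Z < κ := by
      have emb1 : ↑Z ↪ (Σ ξ : ↑(Set.Iio η), ↑(g ξ.1)) := by
        refine ⟨fun z => ⟨(Set.mem_iUnion.1 z.2).choose, ⟨z.1, (Set.mem_iUnion.1 z.2).choose_spec⟩⟩, ?_⟩
        intro z w h
        apply Subtype.ext
        exact congrArg (fun p : (Σ ξ : ↑(Set.Iio η), ↑(g ξ.1)) => (p.2 : O.ToType)) h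
      have h1 := Cardinal.lift_mk_le'.2 ⟨emb1⟩
      rw [Cardinal.lift_uzero] at h1
      have h2 : #(Σ ξ : ↑(Set.Iio η), ↑(g ξ.1)) ≤ #(Set.Iio η) * Cardinal.lift.{1, 0} χ := by
        rw [Cardinal.mk_sigma]
        calc Cardinal.sum (fun ξ : ↑(Set.Iio η) => #↑(g ξ.1))
            ≤ Cardinal.sum (fun _ : ↑(Set.Iio η) => χ) :=
              Cardinal.sum_le_sum _ _ (fun ξ => (hg ξ.1 ξ.2).2.1)
          _ = Cardinal.lift.{0, 1} #↑(Set.Iio η) * Cardinal.lift.{1, 0} χ := Cardinal.sum_const _ _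
          _ = #(Set.Iio η) * Cardinal.lift.{1, 0} χ := by rw [Cardinal.lift_uzero]
      have h3 : #(Set.Iio η) * Cardinal.lift.{1, 0} χ ≤ Cardinal.lift.{1, 0} lam := by
        rw [Ordinal.mk_Iio_ordinal, ← Cardinal.lift_mul]
        apply Cardinal.lift_le.2
        have hηcard : η.card ≤ lam := Order.lt_succ_iff.1 (Cardinal.lt_ord.1 hη)
        exact (mul_le_mul' hηcard hχlam.le).trans (Cardinal.mul_eq_self hinf).le
      have h4 : #↑Z ≤ lam := Cardinal.lift_le.1 ((h1.trans h2).trans h3)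
      exact h4.trans_lt hlamκ
    obtain ⟨δ, hδ⟩ := hbound Z hZcard
    -- embed the previous stages into lam.ord.ToType
    have hembex : Nonempty (↑(Set.Iio η) ↪ lam.ord.ToType) := by
      apply Cardinal.lift_mk_le'.1
      rw [Cardinal.lift_uzero, Ordinal.mk_Iio_ordinal, mk_toType, card_ord]
      exact Cardinal.lift_le.2 (Order.lt_succ_iff.1 (Cardinal.lt_ord.1 hη))
    obtain ⟨emb⟩ := hembex
    -- choose the new elements
    have hsel : ∀ j : ↑J, ∃ y : O.ToType, y ∈ T j.1 ∧ δ < y ∧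
        ∀ ξ : ↑(Set.Iio η), emb ξ < j.1 → ∃ x ∈ g ξ.1, x < y ∧ c (φ x) (φ y) ≤ i := by
      intro j
      set Yset : ↑(Set.Iio η) → Set O.ToType :=
        fun ξ => {y | ∃ x ∈ g ξ.1, x < y ∧ c (φ x) (φ y) ≤ i} with hYdef
      set Fam : Set (Set O.ToType) := {s | ∃ ξ : ↑(Set.Iio η), emb ξ < j.1 ∧ s = Yset ξ}
        with hFamdef
      have hFamU : ∀ s ∈ Fam, s ∈ Uf j.1 := by
        rintro s ⟨ξ, _, rfl⟩
        obtain ⟨x, hx, hxT⟩ := (hg ξ.1 ξ.2).2.2 j.1 j.2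
        exact Filter.mem_of_superset (hT2 j.1 j.2 x hxT)
          (fun y hy => ⟨x, hx, hy.1, hy.2⟩)
      have hFamcard : #↑Fam < ν j.1 := by
        have hinj : Function.Injective
            (fun s : ↑Fam => (⟨emb s.2.choose, s.2.choose_spec.1⟩ : {b // b < j.1})) := by
          intro s w h
          apply Subtype.ext
          have h2 : emb s.2.choose = emb w.2.choose := congrArg Subtype.val h
          have h3 := emb.injective h2
          rw [s.2.choose_spec.2, w.2.choose_spec.2, h3]
        exact (Cardinal.mk_le_of_injective hinj).trans_lt
          (by rw [hρcard j.1]; exact hν1 j.1)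
      have hWmem : T j.1 ∩ ({y | δ < y} ∩ ⋂₀ Fam) ∈ Uf j.1 :=
        Filter.inter_mem (hTmem j.1)
          (Filter.inter_mem (hUfle j.1 (hIoi δ)) (hUfc j.1 Fam hFamcard hFamU))
      obtain ⟨y, hy1, hy2, hy3⟩ := Ultrafilter.nonempty_of_mem hWmem
      exact ⟨y, hy1, hy2, fun ξ hξ => hy3 _ ⟨ξ, hξ, rfl⟩⟩
    choose β hβT hβδ hβY using hsel
    refine ⟨Set.range β, ⟨?_, ?_, ?_⟩, ?_⟩
    · obtain ⟨j0, hj0, _⟩ := hJub (Classical.arbitrary _)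
      exact ⟨β ⟨j0, hj0⟩, Set.mem_range_self _⟩
    · exact Cardinal.mk_range_le.trans hJcard
    · intro j hj
      exact ⟨β ⟨j, hj⟩, Set.mem_range_self _, hβT ⟨j, hj⟩⟩
    · intro ξ hξ
      constructor
      · rintro x hx _ ⟨j', rfl⟩
        have hxZ : x ∈ Z := Set.mem_iUnion.2 ⟨⟨ξ, hξ⟩, hx⟩
        exact (hδ x hxZ).trans (hβδ j')
      · obtain ⟨j', hj', hlt'⟩ := hJub (emb ⟨ξ, hξ⟩)
        obtain ⟨x, hx, hxy, hcol⟩ := hβY ⟨j', hj'⟩ ⟨ξ, hξ⟩ hlt'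
        exact ⟨x, hx, β ⟨j', hj'⟩, Set.mem_range_self _, hxy, hcol⟩
  -- run the recursion
  obtain ⟨G, hG⟩ := rec_exists O
    (fun s => s.Nonempty ∧ #↑s ≤ χ ∧ ∀ j ∈ J, ∃ x ∈ s, x ∈ T j)
    (fun a b => (∀ x ∈ a, ∀ y ∈ b, x < y) ∧
      (∃ x ∈ a, ∃ y ∈ b, x < y ∧ c (φ x) (φ y) ≤ i)) step
  -- assemble the family
  refine ⟨i, hi, (fun η => φ '' G η) '' Set.Iio O, ?_, ?_, ?_, ?_⟩
  · rintro a ⟨η, hη, rfl⟩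
    refine ⟨?_, ?_, ?_⟩
    · rintro _ ⟨x, _, rfl⟩
      exact hφlt x
    · exact (hG η hη).1.1.image φ
    · show #↑(φ '' G η) ≤ Cardinal.lift.{1, 0} χ
      rw [← Cardinal.lift_uzero #↑(φ '' G η), Cardinal.mk_image_eq_lift φ (G η) hφinj]
      exact Cardinal.lift_le.2 (hG η hη).1.2.1
  · -- pairwise disjoint
    have hdisj : ∀ η₁ < O, ∀ η₂ < O, η₁ < η₂ → Disjoint (φ '' G η₁) (φ '' G η₂) := by
      intro η₁ hη₁ η₂ hη₂ hlt'
      rw [Set.disjoint_left]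
      rintro _ ⟨x, hx, rfl⟩ ⟨y, hy, hxy⟩
      have := ((hG η₂ hη₂).2 η₁ hlt').1 x hx y hy
      exact absurd (hφinj hxy.symm ▸ this) (lt_irrefl _)
    rintro a ⟨η₁, hη₁, rfl⟩ b ⟨η₂, hη₂, rfl⟩ hne
    rcases lt_trichotomy η₁ η₂ with h | h | h
    · exact hdisj η₁ hη₁ η₂ hη₂ h
    · exact absurd (by rw [h]) hne
    · exact (hdisj η₂ hη₂ η₁ hη₁ h).symm
  · -- HasCard
    have hinjOn : Set.InjOn (fun η => φ '' G η) (Set.Iio O) := by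
      intro η₁ hη₁ η₂ hη₂ heq
      by_contra hne
      have key : ∀ η₁' ∈ Set.Iio O, ∀ η₂' ∈ Set.Iio O, η₁' < η₂' →
          φ '' G η₁' ≠ φ '' G η₂' := by
        intro η₁' hη₁' η₂' hη₂' hlt' heq'
        obtain ⟨x, hx⟩ := (hG η₁' hη₁').1.1
        have hmem : φ x ∈ φ '' G η₂' := heq' ▸ Set.mem_image_of_mem φ hx
        obtain ⟨y, hy, hxy⟩ := hmem
        have := ((hG η₂' hη₂').2 η₁' hlt').1 x hx y hy
        exact absurd (hφinj hxy ▸ this) (lt_irrefl _)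
      rcases lt_or_gt_of_ne hne with h | h
      · exact key η₁ hη₁ η₂ hη₂ h heq
      · exact key η₂ hη₂ η₁ hη₁ h heq.symm
    show #↑((fun η => φ '' G η) '' Set.Iio O) = Cardinal.lift.{1, 0} κ
    rw [Cardinal.mk_image_eq_of_injOn _ _ hinjOn, Ordinal.mk_Iio_ordinal, card_ord]
  · -- the coloring property
    rintro a ⟨η₁, hη₁, rfl⟩ b ⟨η₂, hη₂, rfl⟩ hab
    rcases lt_trichotomy η₁ η₂ with h | h | h
    · obtain ⟨x, hx, y, hy, _, hcol⟩ := ((hG η₂ hη₂).2 η₁ h).2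
      exact ⟨φ x, Set.mem_image_of_mem φ hx, φ y, Set.mem_image_of_mem φ hy, hcol⟩
    · subst h
      obtain ⟨x, hx⟩ := (hG η₁ hη₁).1.1
      exact absurd (hab (φ x) (Set.mem_image_of_mem φ hx) (φ x) (Set.mem_image_of_mem φ hx))
        (lt_irrefl _)
    · obtain ⟨x, hx⟩ := (hG η₂ hη₂).1.1
      obtain ⟨y, hy⟩ := (hG η₁ hη₁).1.1
      have h1 := ((hG η₁ hη₁).2 η₂ h).1 x hx y hy
      have h2 := hab (φ y) (Set.mem_image_of_mem φ hy) (φ x) (Set.mem_image_of_mem φ hx)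
      exact absurd ((hφmono x y).1 h1) (asymm h2)
end
end

section
/- Suppose χ, θ are infinite regular cardinals below κ, κ is (<χ)-inaccessible, and c : [κ]² → θ witnesses U(κ, κ, θ, χ). Let P be the poset of pairs (i, x) with i < θ, x ∈ [κ]^{<χ}, and c[x]² ∩ i = ∅, ordered by (i,x) ≤ (j,y) iff i = j and x ⊇ y, together with a top element. Then for every τ < min(χ, θ), the product P^τ has precaliber κ, while P^θ is not κ-cc. -/
open Cardinal Set Ordinal

noncomputable section

/-- A condition of the poset `ℙ` associated with `c`: either the top element, or a
pair `(i, x)` with `i < θ`, `x ∈ [κ]^{<χ}`, and `c“[x]² ∩ i = ∅`. -/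
def Cond (κ θ χ : Cardinal) (c : Ordinal → Ordinal → Ordinal) : Type 1 :=
  Option {p : Ordinal × Set Ordinal //
    p.1 < θ.ord ∧ p.2 ⊆ Set.Iio κ.ord ∧
      Cardinal.mk p.2 < Cardinal.lift.{1, 0} χ ∧
      ∀ α ∈ p.2, ∀ β ∈ p.2, α < β → p.1 ≤ c α β}

/-- The ordering of `ℙ`: `(i,x) ≤ (j,y)` iff `i = j` and `x ⊇ y`; `none` is the top. -/
def condLE {κ θ χ : Cardinal} {c : Ordinal → Ordinal → Ordinal} :
    Cond κ θ χ c → Cond κ θ χ c → Prop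
  | _, none => True
  | none, some _ => False
  | some p, some q => p.1.1 = q.1.1 ∧ q.1.2 ⊆ p.1.2

/-- The ordering of the power `ℙ^t`: coordinatewise below `t`. -/
def powLE {κ θ χ : Cardinal} {c : Ordinal → Ordinal → Ordinal} (t : Ordinal)
    (f g : Ordinal → Cond κ θ χ c) : Prop :=
  ∀ j < t, condLE (f j) (g j)



lemma isRegular_lift {c : Cardinal.{0}} (h : c.IsRegular) : (Cardinal.lift.{1} c).IsRegular := by
  constructor
  · exact aleph0_le_lift.mpr h.1
  · rw [← Cardinal.lift_ord, ← Ordinal.lift_cof, h.cof_eq]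

lemma PH {ι β : Type 1} {c : Cardinal.{0}} (hreg : c.IsRegular) (S : Set ι)
    (hS : Cardinal.mk S = Cardinal.lift.{1,0} c) (F : ι → β)
    (himg : Cardinal.mk (F '' S) < Cardinal.lift.{1,0} c) :
    ∃ b, Cardinal.mk {a | a ∈ S ∧ F a = b} = Cardinal.lift.{1,0} c := by
  by_contra hcon
  push_neg at hcon
  have hsub : S ⊆ ⋃ b : F '' S, {a | a ∈ S ∧ F a = b.val} := by
    intro a ha
    exact Set.mem_iUnion.mpr ⟨⟨F a, Set.mem_image_of_mem F ha⟩, ha, rfl⟩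
  have h1 : Cardinal.mk S ≤ Cardinal.sum (fun b : F '' S => Cardinal.mk {a | a ∈ S ∧ F a = b.val}) :=
    (Cardinal.mk_le_mk_of_subset hsub).trans Cardinal.mk_iUnion_le_sum_mk
  have h2 : Cardinal.sum (fun b : F '' S => Cardinal.mk {a | a ∈ S ∧ F a = b.val})
      < Cardinal.lift.{1,0} c := by
    apply Cardinal.sum_lt_of_isRegular (isRegular_lift hreg) himg
    intro b
    exact lt_of_le_of_ne (hS ▸ Cardinal.mk_le_mk_of_subset (fun a ha => ha.1)) (hcon b.val)
  rw [hS] at h1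
  exact absurd (h1.trans_lt h2) (lt_irrefl _)

lemma bdd {κ : Cardinal.{0}} (hκ : κ.IsRegular) (s : Set Ordinal)
    (hs : s ⊆ Set.Iio κ.ord) (hcard : Cardinal.mk s < Cardinal.lift.{1,0} κ) :
    ∃ b < κ.ord, ∀ α ∈ s, α < b := by
  have hsup : (⨆ a : s, Ordinal.lift.{1,0} a.val) < Ordinal.lift.{1,0} κ.ord := by
    apply Ordinal.iSup_lt_ord_lift.{1,0}
    · rw [← Ordinal.lift_cof, hκ.cof_eq]
      simpa using hcard
    · intro a
      exact Ordinal.lift_lt.mpr (hs a.2)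
  obtain ⟨b, hb, hlift⟩ := Ordinal.lt_lift_iff.mp hsup
  refine ⟨b + 1, (Cardinal.isSuccLimit_ord hκ.1).succ_lt hb |>.trans_le (by simp), ?_⟩
  intro α hα
  have h1 : Ordinal.lift.{1,0} α ≤ Ordinal.lift.{1,0} b := by
    rw [hlift]
    exact le_ciSup (Ordinal.bddAbove_range.{1,0} _) (⟨α, hα⟩ : s)
  exact lt_of_le_of_lt (Ordinal.lift_le.mp h1) (lt_add_one b)

lemma mk_small_subsets {κ χ : Cardinal.{0}} (hκ : κ.IsRegular) (hχκ : χ < κ)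
    (hinacc : ∀ lam < κ, ∀ ν < χ, lam ^ ν < κ) (β : Ordinal) (hβ : β < κ.ord) :
    Cardinal.mk {s : Set Ordinal | s ⊆ Set.Iio β ∧ Cardinal.mk s < Cardinal.lift.{1,0} χ}
      < Cardinal.lift.{1,0} κ := by
  set T := {s : Set Ordinal | s ⊆ Set.Iio β ∧ Cardinal.mk s < Cardinal.lift.{1,0} χ}
  have hcov : T ⊆ ⋃ ν : Set.Iio χ.ord,
      Set.range (fun f : (Set.Iio ν.val → Set.Iio β) => (fun a => (f a).val) '' Set.univ) := by
    rintro s ⟨hsub, hsmall⟩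
    obtain ⟨ν', hν', hlift⟩ := Cardinal.lt_lift_iff.mp hsmall
    have hmk : Cardinal.mk (Set.Iio ν'.ord : Set Ordinal) = Cardinal.mk s := by
      rw [Ordinal.mk_Iio_ordinal, Cardinal.card_ord, hlift]
    obtain ⟨e⟩ := Cardinal.eq.mp hmk
    refine Set.mem_iUnion.mpr ⟨⟨ν'.ord, Cardinal.ord_lt_ord.mpr hν'⟩, ?_⟩
    refine ⟨fun a => ⟨(e a).val, hsub (e a).2⟩, ?_⟩
    ext α
    simp only [Set.image_univ, Set.mem_range]
    constructor
    · rintro ⟨a, rfl⟩; exact (e a).2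
    · intro hα
      obtain ⟨a, ha⟩ := e.surjective ⟨α, hα⟩
      exact ⟨a, by rw [ha]⟩
  calc Cardinal.mk T ≤ _ := Cardinal.mk_le_mk_of_subset hcov
    _ ≤ Cardinal.sum (fun ν : Set.Iio χ.ord =>
        Cardinal.mk (Set.range (fun f : (Set.Iio ν.val → Set.Iio β) =>
          (fun a => (f a).val) '' Set.univ))) :=
      Cardinal.mk_iUnion_le_sum_mk
    _ < Cardinal.lift.{1,0} κ := by
      apply Cardinal.sum_lt_of_isRegular (isRegular_lift hκ)
      · rw [Ordinal.mk_Iio_ordinal, Cardinal.card_ord]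
        exact Cardinal.lift_lt.mpr hχκ
      · intro ν
        refine lt_of_le_of_lt Cardinal.mk_range_le ?_
        have h3 : Cardinal.mk (Set.Iio ν.val → Set.Iio β)
            = (Cardinal.lift.{1,0} β.card) ^ (Cardinal.lift.{1,0} ν.val.card) := by
          rw [← Cardinal.power_def, Ordinal.mk_Iio_ordinal, Ordinal.mk_Iio_ordinal]
        rw [h3, ← Cardinal.lift_power]
        exact Cardinal.lift_lt.mpr (hinacc _ (Cardinal.lt_ord.mp hβ) _ (Cardinal.lt_ord.mp ν.2))

noncomputable def dseq (g : Ordinal → Ordinal) : Ordinal → Ordinal :=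
  Ordinal.lt_wf.fix (fun ζ ih => Ordinal.bsup ζ (fun η h => g (ih η h)))

lemma dseq_eq (g : Ordinal → Ordinal) (ζ : Ordinal) :
    dseq g ζ = Ordinal.bsup ζ (fun η _ => g (dseq g η)) := by
  rw [dseq, Ordinal.lt_wf.fix_eq]

lemma dseq_mono (g : Ordinal → Ordinal) {η ζ : Ordinal} (h : η ≤ ζ) :
    dseq g η ≤ dseq g ζ := by
  rw [dseq_eq, dseq_eq, Ordinal.bsup_le_iff]
  intro i hi
  exact Ordinal.le_bsup _ i (lt_of_lt_of_le hi h)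

lemma le_dseq (g : Ordinal → Ordinal) {η ζ : Ordinal} (h : η < ζ) :
    g (dseq g η) ≤ dseq g ζ := by
  rw [dseq_eq g ζ]; exact Ordinal.le_bsup _ η h

lemma mk_Iio_ord (o : Ordinal.{0}) :
    Cardinal.mk (Set.Iio o) = Cardinal.lift.{1,0} o.card := Ordinal.mk_Iio_ordinal o

lemma exists_good {κ χ : Cardinal.{0}} (hκ : κ.IsRegular) (hχ : χ.IsRegular) (hχκ : χ < κ)
    (x : Ordinal → Set Ordinal)
    (hx2 : ∀ ξ < κ.ord, Cardinal.mk (x ξ) < Cardinal.lift.{1,0} χ) :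
    ∃ β < κ.ord, ∀ γ < κ.ord,
      Cardinal.mk {ξ | ξ < κ.ord ∧ ∀ α ∈ x ξ, α < γ → α < β} = Cardinal.lift.{1,0} κ := by
  by_contra hcon
  push_neg at hcon
  -- choice of bad γ for each β
  have hbad : ∀ β < κ.ord, ∃ γ < κ.ord,
      Cardinal.mk {ξ | ξ < κ.ord ∧ ∀ α ∈ x ξ, α < γ → α < β} < Cardinal.lift.{1,0} κ := by
    intro β hβ
    obtain ⟨γ, hγ, hne⟩ := hcon β hβ
    refine ⟨γ, hγ, lt_of_le_of_ne ?_ hne⟩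
    calc Cardinal.mk {ξ | ξ < κ.ord ∧ ∀ α ∈ x ξ, α < γ → α < β}
        ≤ Cardinal.mk (Set.Iio κ.ord) := Cardinal.mk_le_mk_of_subset (fun ξ hξ => hξ.1)
      _ = Cardinal.lift.{1,0} κ := by rw [mk_Iio_ord, Cardinal.card_ord]
  classical
  set γf : Ordinal → Ordinal := fun β => if h : β < κ.ord then (hbad β h).choose else 0 with hγf
  have hγf1 : ∀ β < κ.ord, γf β < κ.ord := by
    intro β h; simp only [hγf, dif_pos h]; exact (hbad β h).choose_spec.1
  have hγf2 : ∀ β (h : β < κ.ord),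
      Cardinal.mk {ξ | ξ < κ.ord ∧ ∀ α ∈ x ξ, α < γf β → α < β} < Cardinal.lift.{1,0} κ := by
    intro β h; simp only [hγf, dif_pos h]; exact (hbad β h).choose_spec.2
  set g : Ordinal → Ordinal := fun o => max (γf o) o + 1 with hg
  set d : Ordinal → Ordinal := dseq g with hd
  have hdlt : ∀ ζ < κ.ord, d ζ < κ.ord := by
    intro ζ
    induction ζ using Ordinal.lt_wf.induction with
    | _ ζ IH =>
      intro hζ
      rw [hd, dseq_eq]
      apply Cardinal.bsup_lt_ord_of_isRegular hκ (Cardinal.lt_ord.mp hζ)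
      intro η hη
      have h1 : dseq g η < κ.ord := IH η hη (hη.trans hζ)
      have h2 : γf (dseq g η) < κ.ord := hγf1 _ h1
      exact (Cardinal.isSuccLimit_ord hκ.1).succ_lt (max_lt h2 h1) |>.trans_le (by simp)
  have hχκo : χ.ord < κ.ord := Cardinal.ord_lt_ord.mpr hχκ
  set δ : Ordinal := d χ.ord with hδdef
  -- covering claim
  have hcover : ∀ ξ < κ.ord, ∃ η < χ.ord, ∀ α ∈ x ξ, α < γf (d η) → α < d η := by
    intro ξ hξ
    by_contra hnc
    push_neg at hnc
    set αf : Ordinal → Ordinal := fun η =>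
      if h : ∃ α, α ∈ x ξ ∧ α < γf (d η) ∧ d η ≤ α then h.choose else 0 with hαf
    have hαfp : ∀ η < χ.ord, αf η ∈ x ξ ∧ αf η < γf (d η) ∧ d η ≤ αf η := by
      intro η hη
      obtain ⟨α, hα1, hα2, hα3⟩ := hnc η hη
      have hex : ∃ α, α ∈ x ξ ∧ α < γf (d η) ∧ d η ≤ α := ⟨α, hα1, hα2, hα3⟩
      simp only [hαf, dif_pos hex]
      exact hex.choose_spec
    have hδlim : ∀ η < χ.ord, g (d η) ≤ δ := by
      intro η hη
      rw [hδdef, hd, dseq_eq g χ.ord]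
      exact Ordinal.le_bsup _ η hη
    have hαfδ : ∀ η < χ.ord, αf η < δ := by
      intro η hη
      have := (hαfp η hη).2.1
      refine this.trans_le (le_trans ?_ (hδlim η hη))
      rw [hg]
      exact ((le_max_left _ _).trans (le_of_lt (lt_add_one _)))
    -- pigeonhole over x ξ
    have himg : Cardinal.mk (αf '' Set.Iio χ.ord) < Cardinal.lift.{1,0} χ := by
      refine lt_of_le_of_lt (Cardinal.mk_le_mk_of_subset ?_) (hx2 ξ hξ)
      rintro α ⟨η, hη, rfl⟩
      exact (hαfp η hη).1
    obtain ⟨αs, hαs⟩ := PH hχ (Set.Iio χ.ord)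
      (by rw [mk_Iio_ord, Cardinal.card_ord]) αf himg
    set Fib := {a | a ∈ Set.Iio χ.ord ∧ αf a = αs} with hFib
    have hFibne : Fib.Nonempty := by
      rw [← Set.nonempty_coe_sort, ← Cardinal.mk_ne_zero_iff, hαs]
      simp [Cardinal.lift_eq_zero, hχ.pos.ne']
    have hFibunb : ∀ η < χ.ord, ∃ η' ∈ Fib, η ≤ η' := by
      intro η hη
      by_contra hb
      push_neg at hb
      have : Fib ⊆ Set.Iio η := fun a ha => hb a ha
      have h1 : Cardinal.mk Fib ≤ Cardinal.lift.{1,0} η.card :=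
        (Cardinal.mk_le_mk_of_subset this).trans_eq (mk_Iio_ord η)
      rw [hαs] at h1
      exact absurd (h1.trans_lt (Cardinal.lift_lt.mpr (Cardinal.lt_ord.mp hη)))
        (lt_irrefl _)
    have hup : ∀ η < χ.ord, g (d η) ≤ αs := by
      intro η hη
      have hη1 : η + 1 < χ.ord := (Cardinal.isSuccLimit_ord hχ.1).succ_lt hη |>.trans_le (by simp)
      obtain ⟨η', hη', hle⟩ := hFibunb (η + 1) hη1
      have h1 : g (d η) ≤ d (η + 1) := le_dseq g (lt_add_one η)
      have h2 : d (η + 1) ≤ d η' := dseq_mono g hle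
      have h3 : d η' ≤ αf η' := (hαfp η' hη'.1).2.2
      rw [hη'.2] at h3
      exact h1.trans (h2.trans h3)
    have hcontra : δ ≤ αs := by
      rw [hδdef, hd, dseq_eq g χ.ord, Ordinal.bsup_le_iff]
      exact fun η hη => hup η hη
    obtain ⟨η₀, hη₀⟩ := hFibne
    have : αs < δ := by rw [← hη₀.2]; exact hαfδ η₀ hη₀.1
    exact absurd (hcontra.trans_lt this) (lt_irrefl _)
  -- final count
  have hsub : Set.Iio κ.ord ⊆ ⋃ η : Set.Iio χ.ord,
      {ξ | ξ < κ.ord ∧ ∀ α ∈ x ξ, α < γf (d η.val) → α < d η.val} := by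
    intro ξ hξ
    obtain ⟨η, hη, hp⟩ := hcover ξ hξ
    exact Set.mem_iUnion.mpr ⟨⟨η, hη⟩, hξ, hp⟩
  have h1 : Cardinal.lift.{1,0} κ ≤ Cardinal.sum (fun η : Set.Iio χ.ord =>
      Cardinal.mk {ξ | ξ < κ.ord ∧ ∀ α ∈ x ξ, α < γf (d η.val) → α < d η.val}) := by
    calc Cardinal.lift.{1,0} κ = Cardinal.mk (Set.Iio κ.ord) := by
          rw [mk_Iio_ord, Cardinal.card_ord]
      _ ≤ _ := (Cardinal.mk_le_mk_of_subset hsub).trans Cardinal.mk_iUnion_le_sum_mk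
  have h2 : Cardinal.sum (fun η : Set.Iio χ.ord =>
      Cardinal.mk {ξ | ξ < κ.ord ∧ ∀ α ∈ x ξ, α < γf (d η.val) → α < d η.val})
      < Cardinal.lift.{1,0} κ := by
    apply Cardinal.sum_lt_of_isRegular (isRegular_lift hκ)
    · rw [mk_Iio_ord, Cardinal.card_ord]
      exact Cardinal.lift_lt.mpr hχκ
    · intro η
      exact hγf2 _ (hdlt _ (η.2.trans hχκo))
  exact absurd (h1.trans_lt h2) (lt_irrefl _)

open Classical in
noncomputable def pickF (κ : Cardinal.{0}) (x : Ordinal → Set Ordinal)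
    (b : Ordinal → Ordinal) (β : Ordinal) : Ordinal → Ordinal :=
  Ordinal.lt_wf.fix (fun ζ ih =>
    if h : ({ξ | (ξ < κ.ord ∧ ∀ α ∈ x ξ,
        α < max β (Ordinal.bsup ζ (fun η hh => b (ih η hh))) → α < β) ∧
        ∀ η, ∀ hh : η < ζ, ih η hh ≠ ξ} : Set Ordinal).Nonempty
    then h.some else 0)

open Classical in
lemma pickF_eq (κ : Cardinal.{0}) (x : Ordinal → Set Ordinal)
    (b : Ordinal → Ordinal) (β : Ordinal) (ζ : Ordinal) :
    pickF κ x b β ζ =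
    if h : ({ξ | (ξ < κ.ord ∧ ∀ α ∈ x ξ,
        α < max β (Ordinal.bsup ζ (fun η _ => b (pickF κ x b β η))) → α < β) ∧
        ∀ η, ∀ _ : η < ζ, pickF κ x b β η ≠ ξ} : Set Ordinal).Nonempty
    then h.some else 0 := by
  rw [pickF, Ordinal.lt_wf.fix_eq]

lemma deltaSystem {κ χ : Cardinal.{0}} (hκ : κ.IsRegular) (hχ : χ.IsRegular) (hχκ : χ < κ)
    (hinacc : ∀ lam < κ, ∀ ν < χ, lam ^ ν < κ) (x : Ordinal → Set Ordinal)
    (hx1 : ∀ ξ < κ.ord, x ξ ⊆ Set.Iio κ.ord)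
    (hx2 : ∀ ξ < κ.ord, Cardinal.mk (x ξ) < Cardinal.lift.{1,0} χ) :
    ∃ I ⊆ Set.Iio κ.ord, Cardinal.mk I = Cardinal.lift.{1,0} κ ∧ ∃ r : Set Ordinal,
      (∀ ξ ∈ I, r ⊆ x ξ) ∧
      ∀ ξ ∈ I, ∀ η ∈ I, ξ ≠ η → x ξ ∩ x η = r ∧
        (SetLT (x ξ \ r) (x η \ r) ∨ SetLT (x η \ r) (x ξ \ r)) := by
  classical
  -- bound function
  set bF : Ordinal → Ordinal := fun ξ =>
    if h : ξ < κ.ord then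
      (bdd hκ (x ξ) (hx1 ξ h) ((hx2 ξ h).trans (Cardinal.lift_lt.mpr hχκ))).choose
    else 0 with hbF
  have hb1 : ∀ ξ, bF ξ < κ.ord := by
    intro ξ
    by_cases h : ξ < κ.ord
    · simp only [hbF, dif_pos h]
      exact (bdd hκ (x ξ) (hx1 ξ h) ((hx2 ξ h).trans (Cardinal.lift_lt.mpr hχκ))).choose_spec.1
    · simp only [hbF, dif_neg h]
      exact Cardinal.lt_ord.mpr (by simpa using hκ.pos)
  have hb2 : ∀ ξ < κ.ord, ∀ α ∈ x ξ, α < bF ξ := by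
    intro ξ h
    simp only [hbF, dif_pos h]
    exact (bdd hκ (x ξ) (hx1 ξ h) ((hx2 ξ h).trans (Cardinal.lift_lt.mpr hχκ))).choose_spec.2
  -- good β
  obtain ⟨β, hβκ, hgood⟩ := exists_good hκ hχ hχκ x hx2
  set p : Ordinal → Ordinal := pickF κ x bF β with hp
  set G : Ordinal → Ordinal :=
    fun ζ => max β (Ordinal.bsup ζ (fun η _ => bF (p η))) with hG
  have hGκ : ∀ ζ < κ.ord, G ζ < κ.ord := by
    intro ζ hζ
    rw [hG]
    apply max_lt hβκ
    apply Cardinal.bsup_lt_ord_of_isRegular hκ (Cardinal.lt_ord.mp hζ)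
    intro η _
    exact hb1 _
  -- key property of p
  have hkey : ∀ ζ < κ.ord, (p ζ < κ.ord ∧ ∀ α ∈ x (p ζ), α < G ζ → α < β) ∧
      ∀ η, η < ζ → p η ≠ p ζ := by
    intro ζ
    induction ζ using Ordinal.lt_wf.induction with
    | _ ζ IH =>
      intro hζ
      have hne : ({ξ | (ξ < κ.ord ∧ ∀ α ∈ x ξ, α < G ζ → α < β) ∧
          ∀ η, ∀ _ : η < ζ, p η ≠ ξ} : Set Ordinal).Nonempty := by
        have hS := hgood (G ζ) (hGκ ζ hζ)
        by_contra hemp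
        rw [Set.not_nonempty_iff_eq_empty] at hemp
        have hsub : {ξ | ξ < κ.ord ∧ ∀ α ∈ x ξ, α < G ζ → α < β} ⊆
            {ξ | ∃ η, ∃ _ : η < ζ, p η = ξ} := by
          intro ξ hξ
          by_contra hn
          have hmem2 : ξ ∈ ({ξ | (ξ < κ.ord ∧ ∀ α ∈ x ξ, α < G ζ → α < β) ∧
              ∀ η, ∀ _ : η < ζ, p η ≠ ξ} : Set Ordinal) :=
            ⟨hξ, fun η hh heq => hn ⟨η, hh, heq⟩⟩
          rw [hemp] at hmem2
          exact hmem2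
        have h1 : Cardinal.lift.{1,0} κ ≤
            Cardinal.mk {ξ | ∃ η, ∃ _ : η < ζ, p η = ξ} := by
          rw [← hS]; exact Cardinal.mk_le_mk_of_subset hsub
        have h2 : Cardinal.mk {ξ | ∃ η, ∃ _ : η < ζ, p η = ξ}
            ≤ Cardinal.lift.{1,0} ζ.card := by
          have : {ξ | ∃ η, ∃ _ : η < ζ, p η = ξ} = p '' Set.Iio ζ := by
            ext ξ; constructor
            · rintro ⟨η, hh, rfl⟩; exact ⟨η, hh, rfl⟩
            · rintro ⟨η, hh, rfl⟩; exact ⟨η, hh, rfl⟩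
          rw [this, ← mk_Iio_ord]
          exact Cardinal.mk_image_le
        exact absurd ((h1.trans h2).trans_lt
          (Cardinal.lift_lt.mpr (Cardinal.lt_ord.mp hζ))) (lt_irrefl _)
      have hGeq : G ζ = max β (Ordinal.bsup ζ (fun η _ => bF (pickF κ x bF β η))) := by
        simp only [hG, hp]
      have hne2 : ({ξ | (ξ < κ.ord ∧ ∀ α ∈ x ξ,
          α < max β (Ordinal.bsup ζ (fun η _ => bF (pickF κ x bF β η))) → α < β) ∧
          ∀ η, ∀ _ : η < ζ, pickF κ x bF β η ≠ ξ} : Set Ordinal).Nonempty := by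
        obtain ⟨ξ, hξ⟩ := hne
        refine ⟨ξ, ⟨⟨hξ.1.1, fun α hα hlt => hξ.1.2 α hα (by rw [hGeq]; exact hlt)⟩,
          fun η hh heq => hξ.2 η hh (by rw [hp]; exact heq)⟩⟩
      have hmem : pickF κ x bF β ζ ∈ ({ξ | (ξ < κ.ord ∧ ∀ α ∈ x ξ,
          α < max β (Ordinal.bsup ζ (fun η _ => bF (pickF κ x bF β η))) → α < β) ∧
          ∀ η, ∀ _ : η < ζ, pickF κ x bF β η ≠ ξ} : Set Ordinal) := by
        rw [pickF_eq κ x bF β ζ, dif_pos hne2]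
        exact hne2.some_mem
      refine ⟨⟨?_, fun α hα hlt => hmem.1.2 α hα (by rw [← hGeq]; exact hlt)⟩,
        fun η hh heq => hmem.2 η hh (by rw [← hp]; exact heq)⟩
      rw [hp]
      exact hmem.1.1
  have hp1 : ∀ ζ < κ.ord, p ζ < κ.ord := fun ζ h => ((hkey ζ h).1).1
  have hp2 : ∀ ζ < κ.ord, ∀ α ∈ x (p ζ), α < G ζ → α < β :=
    fun ζ h => ((hkey ζ h).1).2
  have hp3 : ∀ ζ < κ.ord, ∀ η, η < ζ → p η ≠ p ζ := fun ζ h => (hkey ζ h).2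
  -- pigeonhole on traces
  have himg : Cardinal.mk ((fun ζ => x (p ζ) ∩ Set.Iio β) '' Set.Iio κ.ord)
      < Cardinal.lift.{1,0} κ := by
    refine lt_of_le_of_lt (Cardinal.mk_le_mk_of_subset ?_)
      (mk_small_subsets hκ hχκ hinacc β hβκ)
    rintro s ⟨ζ, hζ, rfl⟩
    exact ⟨Set.inter_subset_right, lt_of_le_of_lt
      (Cardinal.mk_le_mk_of_subset Set.inter_subset_left) (hx2 _ (hp1 ζ hζ))⟩
  obtain ⟨r, hr⟩ := PH hκ (Set.Iio κ.ord)
    (by rw [mk_Iio_ord, Cardinal.card_ord]) (fun ζ => x (p ζ) ∩ Set.Iio β) himg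
  set I0 := {ζ | ζ ∈ Set.Iio κ.ord ∧ x (p ζ) ∩ Set.Iio β = r} with hI0
  -- auxiliary ordered claim
  have haux : ∀ ζ ∈ I0, ∀ ζ' ∈ I0, ζ < ζ' →
      x (p ζ) ∩ x (p ζ') = r ∧ SetLT (x (p ζ) \ r) (x (p ζ') \ r) := by
    rintro ζ ⟨hζκ, hζr⟩ ζ' ⟨hζ'κ, hζ'r⟩ hlt
    have hbound : ∀ α ∈ x (p ζ), α < G ζ' := by
      intro α hα
      refine lt_of_lt_of_le (hb2 _ (hp1 ζ hζκ) α hα) ?_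
      rw [hG]
      exact le_trans (Ordinal.le_bsup _ ζ hlt) (le_max_right _ _)
    constructor
    · apply Set.Subset.antisymm
      · rintro α ⟨hα1, hα2⟩
        rw [← hζr]
        exact ⟨hα1, hp2 ζ' hζ'κ α hα2 (hbound α hα1)⟩
      · intro α hα
        constructor
        · rw [← hζr] at hα; exact hα.1
        · rw [← hζ'r] at hα; exact hα.1
    · rintro α ⟨hα1, hα2⟩ α' ⟨hα'1, hα'2⟩
      have hG' : G ζ' ≤ α' := by
        by_contra hn
        push_neg at hn
        exact hα'2 (by rw [← hζ'r]; exact ⟨hα'1, hp2 ζ' hζ'κ α' hα'1 hn⟩)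
      exact lt_of_lt_of_le (hbound α hα1) hG'
  refine ⟨p '' I0, ?_, ?_, r, ?_, ?_⟩
  · rintro ξ ⟨ζ, hζ, rfl⟩; exact hp1 ζ hζ.1
  · rw [Cardinal.mk_image_eq_of_injOn _ _ ?_, hr]
    intro ζ hζ ζ' hζ' heq
    by_contra hne
    rcases lt_or_gt_of_ne hne with h | h
    · exact hp3 ζ' hζ'.1 ζ h heq
    · exact hp3 ζ hζ.1 ζ' h heq.symm
  · rintro ξ ⟨ζ, hζ, rfl⟩
    rw [← hζ.2]
    exact Set.inter_subset_left
  · rintro ξ ⟨ζ, hζ, rfl⟩ η ⟨ζ', hζ', rfl⟩ hne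
    have hζne : ζ ≠ ζ' := fun h => hne (by rw [h])
    rcases lt_or_gt_of_ne hζne with h | h
    · obtain ⟨h1, h2⟩ := haux ζ hζ ζ' hζ' h
      exact ⟨h1, Or.inl h2⟩
    · obtain ⟨h1, h2⟩ := haux ζ' hζ' ζ hζ h
      exact ⟨by rw [Set.inter_comm]; exact h1, Or.inr h2⟩


theorem stmt7 (κ θ χ : Cardinal) (c : Ordinal → Ordinal → Ordinal)
    (hκreg : κ.IsRegular) (hκunc : ℵ₀ < κ)
    (hθreg : θ.IsRegular) (hθκ : θ < κ)
    (hχreg : χ.IsRegular) (hχκ : χ < κ)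
    (hinacc : ∀ lam < κ, ∀ ν < χ, lam ^ ν < κ)
    (hc : WitnessU κ κ θ χ c) :
    (∀ τ : Cardinal, τ < χ → τ < θ →
      ∀ A : Set (Ordinal → Cond κ θ χ c), HasCard A κ →
        ∃ B ⊆ A, HasCard B κ ∧
          ∀ s : Finset (Ordinal → Cond κ θ χ c), ↑s ⊆ B →
            ∃ h, ∀ f ∈ s, powLE τ.ord h f) ∧
    ∃ A : Set (Ordinal → Cond κ θ χ c), HasCard A κ ∧
      ∀ f ∈ A, ∀ g ∈ A, f ≠ g →
        ¬ ∃ h, powLE θ.ord h f ∧ powLE θ.ord h g := by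
  have hκpos : (0:Ordinal) < κ.ord := Cardinal.lt_ord.mpr (by simpa using hκreg.pos)
  constructor
  · -- Part 1: precaliber of ℙ^τ
    intro τ hτχ hτθ A hA
    classical
    -- enumeration of A
    have hmkA : Cardinal.mk (Set.Iio κ.ord : Set Ordinal) = Cardinal.mk A := by
      rw [mk_Iio_ord, Cardinal.card_ord, hA]
    obtain ⟨e⟩ := Cardinal.eq.mp hmkA
    set f : Ordinal → (Ordinal → Cond κ θ χ c) := fun ξ =>
      if h : ξ < κ.ord then (e ⟨ξ, h⟩).val else (fun _ => none) with hf
    have hfA : ∀ ξ < κ.ord, f ξ ∈ A := by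
      intro ξ h; have hfe : f ξ = (e ⟨ξ, h⟩).val := dif_pos h; rw [hfe]; exact (e ⟨ξ, h⟩).2
    have hfinj : Set.InjOn f (Set.Iio κ.ord) := by
      intro ξ hξ ξ' hξ' heq
      have hfe : f ξ = (e ⟨ξ, hξ⟩).val := dif_pos hξ
      have hfe' : f ξ' = (e ⟨ξ', hξ'⟩).val := dif_pos hξ'
      rw [hfe, hfe'] at heq
      have h2 := e.injective (Subtype.ext heq)
      exact congrArg Subtype.val h2
    -- supports
    set supp : Cond κ θ χ c → Set Ordinal := fun p =>
      match p with
      | none => ∅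
      | some q => q.val.2 with hsupp
    have hsupp1 : ∀ p : Cond κ θ χ c, supp p ⊆ Set.Iio κ.ord := by
      rintro (- | q)
      · simp [hsupp]
      · exact q.2.2.1
    have hsupp2 : ∀ p : Cond κ θ χ c, Cardinal.mk (supp p) < Cardinal.lift.{1,0} χ := by
      rintro (- | q)
      · have hz : Cardinal.mk (supp (none : Cond κ θ χ c)) = 0 := by simp [hsupp]
        rw [hz]
        exact lt_of_lt_of_le Cardinal.aleph0_pos (aleph0_le_lift.{0,1}.mpr hχreg.1)
      · exact q.2.2.2.1
    set x : Ordinal → Set Ordinal := fun ξ => ⋃ j ∈ Set.Iio τ.ord, supp (f ξ j) with hx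
    have hx1 : ∀ ξ < κ.ord, x ξ ⊆ Set.Iio κ.ord := by
      intro ξ _ α hα
      obtain ⟨j, -, hj2⟩ := Set.mem_iUnion₂.mp hα
      exact hsupp1 _ hj2
    have hsuppx : ∀ ξ, ∀ j < τ.ord, supp (f ξ j) ⊆ x ξ := by
      intro ξ j hj α hα
      exact Set.mem_iUnion₂.mpr ⟨j, hj, hα⟩
    have hx2 : ∀ ξ < κ.ord, Cardinal.mk (x ξ) < Cardinal.lift.{1,0} χ := by
      intro ξ _
      refine lt_of_le_of_lt (Cardinal.mk_biUnion_le _ _) ?_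
      apply Cardinal.mul_lt_of_lt (aleph0_le_lift.mpr hχreg.1)
      · rw [mk_Iio_ord, Cardinal.card_ord]
        exact Cardinal.lift_lt.mpr hτχ
      · apply Cardinal.iSup_lt_of_isRegular (isRegular_lift hχreg)
        · rw [mk_Iio_ord, Cardinal.card_ord]
          exact Cardinal.lift_lt.mpr hτχ
        · intro j
          exact hsupp2 _
    -- Δ-system
    obtain ⟨I, hIsub, hImk, r, hrsub, hIdelta⟩ :=
      deltaSystem hκreg hχreg hχκ hinacc x hx1 hx2
    have hlκ0 : Cardinal.lift.{1,0} κ ≠ 0 := by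
      simp [Cardinal.lift_eq_zero, hκreg.pos.ne']
    have hIne : I.Nonempty := by
      rw [← Set.nonempty_coe_sort, ← Cardinal.mk_ne_zero_iff, hImk]; exact hlκ0
    have hrsmall : Cardinal.mk r < Cardinal.lift.{1,0} χ := by
      obtain ⟨ξ₀, hξ₀⟩ := hIne
      exact lt_of_le_of_lt (Cardinal.mk_le_mk_of_subset (hrsub ξ₀ hξ₀))
        (hx2 ξ₀ (hIsub hξ₀))
    obtain ⟨νr, hνr, hνrlift⟩ := Cardinal.lt_lift_iff.mp hrsmall
    -- pattern pigeonhole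
    set Pat := fun (ξ : Ordinal) (j : (Set.Iio τ.ord : Set Ordinal)) =>
      Option.map (fun q =>
        ((⟨q.val.1, q.2.1⟩ : (Set.Iio θ.ord : Set Ordinal)), {a : ↥r | a.val ∈ q.val.2}))
        (f ξ j.val) with hPat
    have hmkP : Cardinal.mk (↥(Set.Iio τ.ord) →
        Option (↥(Set.Iio θ.ord) × Set (↥r))) < Cardinal.lift.{1,0} κ := by
      have h1 : Cardinal.mk (↥(Set.Iio τ.ord) →
          Option (↥(Set.Iio θ.ord) × Set (↥r)))
          = (Cardinal.lift.{1,0} θ * 2 ^ Cardinal.lift.{1,0} νr + 1) ^ Cardinal.lift.{1,0} τ := by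
        rw [← Cardinal.power_def, Cardinal.mk_option, Cardinal.mk_prod, Cardinal.mk_set,
          mk_Iio_ord, mk_Iio_ord, Cardinal.card_ord, Cardinal.card_ord, hνrlift]
        simp
      rw [h1, show (2 : Cardinal.{1}) = Cardinal.lift.{1,0} 2 by simp,
        ← Cardinal.lift_power, ← Cardinal.lift_mul,
        show (1 : Cardinal.{1}) = Cardinal.lift.{1,0} 1 by simp,
        ← Cardinal.lift_add, ← Cardinal.lift_power]
      apply Cardinal.lift_lt.mpr
      apply hinacc _ ?_ _ hτχ
      apply Cardinal.add_lt_of_lt hκreg.1 ?_ (lt_of_lt_of_le Cardinal.one_lt_aleph0 hκreg.1)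
      apply Cardinal.mul_lt_of_lt hκreg.1 hθκ
      exact hinacc 2 (lt_of_lt_of_le (Cardinal.nat_lt_aleph0 2) hκreg.1) νr hνr
    obtain ⟨pat, hpat⟩ := PH hκreg I hImk Pat
      (lt_of_le_of_lt (Cardinal.mk_le_mk_of_subset (Set.subset_univ _))
        (by rw [Cardinal.mk_univ]; exact hmkP))
    set I1 := {a | a ∈ I ∧ Pat a = pat} with hI1
    have hI1sub : I1 ⊆ I := fun a ha => ha.1
    -- tail cardinality pigeonhole
    have htail : ∀ ξ ∈ I, ∃ ν : Cardinal.{0},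
        Cardinal.lift.{1,0} ν = Cardinal.mk ↥(x ξ \ r) := by
      intro ξ hξ
      obtain ⟨ν, -, hν2⟩ := Cardinal.lt_lift_iff.mp
        (lt_of_le_of_lt (Cardinal.mk_le_mk_of_subset Set.diff_subset) (hx2 ξ (hIsub hξ)))
      exact ⟨ν, hν2⟩
    set Fν : Ordinal → Ordinal := fun ξ =>
      if h : ∃ ν : Cardinal.{0}, Cardinal.lift.{1,0} ν = Cardinal.mk ↥(x ξ \ r)
      then h.choose.ord else 0 with hFν
    have hFν1 : ∀ ξ ∈ I, Cardinal.lift.{1,0} (Fν ξ).card = Cardinal.mk ↥(x ξ \ r) := by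
      intro ξ hξ
      simp only [hFν, dif_pos (htail ξ hξ)]
      rw [Cardinal.card_ord]
      exact (htail ξ hξ).choose_spec
    have hFν2 : ∀ ξ ∈ I, Fν ξ < χ.ord := by
      intro ξ hξ
      simp only [hFν, dif_pos (htail ξ hξ)]
      rw [Cardinal.ord_lt_ord, ← Cardinal.lift_lt.{0,1}, (htail ξ hξ).choose_spec]
      exact lt_of_le_of_lt (Cardinal.mk_le_mk_of_subset Set.diff_subset) (hx2 ξ (hIsub hξ))
    have hI1mk : Cardinal.mk I1 = Cardinal.lift.{1,0} κ := hpat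
    obtain ⟨o, ho⟩ := PH hκreg I1 hI1mk Fν (by
      refine lt_of_le_of_lt (Cardinal.mk_le_mk_of_subset
        (show Fν '' I1 ⊆ Set.Iio χ.ord from ?_)) ?_
      · rintro - ⟨ξ, hξ, rfl⟩
        exact hFν2 ξ (hI1sub hξ)
      · rw [mk_Iio_ord, Cardinal.card_ord]
        exact Cardinal.lift_lt.mpr hχκ)
    set I2 := {a | a ∈ I1 ∧ Fν a = o} with hI2
    have hI2sub : I2 ⊆ I1 := fun a ha => ha.1
    set χ' : Cardinal.{0} := o.card with hχ'
    have hI2ne : I2.Nonempty := by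
      rw [← Set.nonempty_coe_sort, ← Cardinal.mk_ne_zero_iff, ho]; exact hlκ0
    have hI2tail : ∀ ξ ∈ I2, Cardinal.mk ↥(x ξ \ r) = Cardinal.lift.{1,0} χ' := by
      rintro ξ ⟨hξ1, hξ2⟩
      rw [← hFν1 ξ (hI1sub hξ1), hξ2]
    have hχ'χ : χ' < χ := by
      obtain ⟨ξ₀, hξ₀⟩ := hI2ne
      rw [← Cardinal.lift_lt.{0,1}, ← hI2tail ξ₀ hξ₀]
      exact lt_of_le_of_lt (Cardinal.mk_le_mk_of_subset Set.diff_subset)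
        (hx2 ξ₀ (hIsub (hI1sub (hI2sub hξ₀))))
    -- the uniform color bound
    set ci : Ordinal → Ordinal := fun j =>
      if hj : j < τ.ord then
        (match pat ⟨j, hj⟩ with
          | none => 0
          | some pr => pr.1.val)
      else 0 with hci
    have hciθ : ∀ j, ci j < θ.ord := by
      intro j
      have hθ0 : (0:Ordinal) < θ.ord := Cardinal.lt_ord.mpr (by simpa using hθreg.pos)
      by_cases hj : j < τ.ord
      · simp only [hci, dif_pos hj]
        rcases hpj : pat ⟨j, hj⟩ with - | pr
        · simpa [hpj] using hθ0
        · simp only [hci, dif_pos hj, hpj]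
          exact pr.1.2
      · simpa [hci, dif_neg hj] using hθ0
    set istar := Ordinal.bsup τ.ord (fun j _ => ci j) with histar
    have histarθ : istar < θ.ord := by
      apply Cardinal.bsup_lt_ord_of_isRegular hθreg
      · rw [Cardinal.card_ord]; exact hτθ
      · intro j _; exact hciθ j
    have hcile : ∀ j (hj : j < τ.ord) pr, pat ⟨j, hj⟩ = some pr → pr.1.val ≤ istar := by
      intro j hj pr hpr
      refine le_trans ?_ (Ordinal.le_bsup (fun j _ => ci j) j hj)
      simp only [hci, dif_pos hj, hpr]
      exact le_refl _
    -- thinning via U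
    obtain ⟨I3, hI3sub, hI3mk, Hcross⟩ : ∃ I3, I3 ⊆ I2 ∧
        Cardinal.mk I3 = Cardinal.lift.{1,0} κ ∧
        ∀ ξ ∈ I3, ∀ ξ' ∈ I3, ξ ≠ ξ' →
          ∀ α ∈ x ξ \ r, ∀ α' ∈ x ξ' \ r, α < α' → istar < c α α' := by
      by_cases hχ'0 : χ' = 0
      · refine ⟨I2, le_refl _, ho, ?_⟩
        intro ξ hξ ξ' hξ' hne α hα α' hα' hαα'
        exfalso
        have h0 : Cardinal.mk ↥(x ξ \ r) = 0 := by rw [hI2tail ξ hξ, hχ'0]; simp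
        rw [Cardinal.mk_eq_zero_iff] at h0
        have hemp := Set.isEmpty_coe_sort.mp h0
        rw [hemp] at hα
        exact hα
      · -- apply the U property to the family of tails
        have hdisjfam : IsDisjFamily κ χ' ((fun ξ => x ξ \ r) '' I2) := by
          refine ⟨?_, ?_, ?_⟩
          · rintro - ⟨ξ, hξ, rfl⟩
            exact ⟨fun α hα => hx1 ξ (hIsub (hI1sub (hI2sub hξ))) hα.1, hI2tail ξ hξ⟩
          · rintro a ⟨ξ, hξ, rfl⟩ b ⟨ξ', hξ', rfl⟩ hne
            have hξne : ξ ≠ ξ' := fun h => hne (by rw [h])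
            have hD := (hIdelta ξ (hI1sub (hI2sub hξ)) ξ' (hI1sub (hI2sub hξ')) hξne).1
            simp only [Function.onFun, id_eq]
            rw [Set.disjoint_left]
            rintro α ⟨hα1, hα2⟩ ⟨hα'1, -⟩
            exact hα2 (hD ▸ Set.mem_inter hα1 hα'1)
          · have hinj : Set.InjOn (fun ξ => x ξ \ r) I2 := by
              intro ξ hξ ξ' hξ' heq
              by_contra hne
              have hD := (hIdelta ξ (hI1sub (hI2sub hξ)) ξ' (hI1sub (hI2sub hξ')) hne).1
              have hnonempty : (x ξ \ r).Nonempty := by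
                rw [← Set.nonempty_coe_sort, ← Cardinal.mk_ne_zero_iff, hI2tail ξ hξ]
                simpa [Cardinal.lift_eq_zero] using hχ'0
              obtain ⟨α, hα⟩ := hnonempty
              have heq' : x ξ \ r = x ξ' \ r := heq
              have hα' : α ∈ x ξ' \ r := heq' ▸ hα
              exact hα.2 (hD ▸ Set.mem_inter hα.1 hα'.1)
            rw [HasCard, Cardinal.mk_image_eq_of_injOn _ _ hinj, ho]
        obtain ⟨B', hB'sub, hB'card, hB'⟩ := hc.2 χ' hχ'χ _ hdisjfam istar histarθ
        set I3 := {a | a ∈ I2 ∧ x a \ r ∈ B'} with hI3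
        have himgeq : (fun ξ => x ξ \ r) '' I3 = B' := by
          apply Set.Subset.antisymm
          · rintro - ⟨ξ, hξ, rfl⟩; exact hξ.2
          · intro b hb
            obtain ⟨ξ, hξ, rfl⟩ := hB'sub hb
            exact ⟨ξ, ⟨hξ, hb⟩, rfl⟩
        have hinj3 : Set.InjOn (fun ξ => x ξ \ r) I3 := by
          intro ξ hξ ξ' hξ' heq
          by_contra hne
          have hD := (hIdelta ξ (hI1sub (hI2sub hξ.1)) ξ' (hI1sub (hI2sub hξ'.1)) hne).1
          have hnonempty : (x ξ \ r).Nonempty := by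
            rw [← Set.nonempty_coe_sort, ← Cardinal.mk_ne_zero_iff, hI2tail ξ hξ.1]
            simpa [Cardinal.lift_eq_zero] using hχ'0
          obtain ⟨α, hα⟩ := hnonempty
          have heq' : x ξ \ r = x ξ' \ r := heq
          have hα' : α ∈ x ξ' \ r := heq' ▸ hα
          exact hα.2 (hD ▸ Set.mem_inter hα.1 hα'.1)
        refine ⟨I3, fun a ha => ha.1, ?_, ?_⟩
        · rw [← Cardinal.mk_image_eq_of_injOn _ _ hinj3, himgeq]
          exact hB'card
        · intro ξ hξ ξ' hξ' hne α hα α' hα' hαα'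
          have hcomp := (hIdelta ξ (hI1sub (hI2sub hξ.1)) ξ' (hI1sub (hI2sub hξ'.1)) hne).2
          rcases hcomp with hlt | hgt
          · exact hB' _ hξ.2 _ hξ'.2 hlt α hα α' hα'
          · exact absurd (hgt α' hα' α hα) (asymm hαα')
    have hPatmem : ∀ ξ ∈ I3, Pat ξ = pat := fun ξ hξ => ((hI3sub hξ).1).2
    -- final set B
    refine ⟨f '' I3, ?_, ?_, ?_⟩
    · rintro - ⟨ξ, hξ, rfl⟩
      exact hfA ξ (hIsub (hI1sub (hI2sub (hI3sub hξ))))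
    · rw [HasCard, Cardinal.mk_image_eq_of_injOn _ _
        (hfinj.mono (fun a ha => hIsub (hI1sub (hI2sub (hI3sub ha))))), hI3mk]
    · intro s hs
      set Y : Ordinal → Set Ordinal := fun j =>
        ⋃ g ∈ (↑s : Set (Ordinal → Cond κ θ χ c)), supp (g j) with hY
      have hYsub : ∀ j, Y j ⊆ Set.Iio κ.ord := by
        intro j α hα
        obtain ⟨g, -, hg2⟩ := Set.mem_iUnion₂.mp hα
        exact hsupp1 _ hg2
      have hfin : Cardinal.mk ↥(↑s : Set (Ordinal → Cond κ θ χ c)) < Cardinal.lift.{1,0} χ :=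
        lt_of_lt_of_le (s.finite_toSet.lt_aleph0) (aleph0_le_lift.{0,1}.mpr hχreg.1)
      have hYsmall : ∀ j, Cardinal.mk ↥(Y j) < Cardinal.lift.{1,0} χ := by
        intro j
        refine lt_of_le_of_lt (Cardinal.mk_biUnion_le _ _) ?_
        apply Cardinal.mul_lt_of_lt (aleph0_le_lift.{0,1}.mpr hχreg.1) hfin
        apply Cardinal.iSup_lt_of_isRegular (isRegular_lift hχreg) hfin
        intro g
        exact hsupp2 _
      have hsel : ∀ g ∈ s, ∃ ξ, ξ ∈ I3 ∧ f ξ = g := by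
        intro g hg
        obtain ⟨ξ, hξ, rfl⟩ := hs hg
        exact ⟨ξ, hξ, rfl⟩
      -- the key coloring fact
      have hkey : ∀ j (hj : j < τ.ord) (pr : ↥(Set.Iio θ.ord) × Set ↥r),
          pat ⟨j, hj⟩ = some pr →
          ∀ α ∈ Y j, ∀ β ∈ Y j, α < β → pr.1.val ≤ c α β := by
        intro j hj pr hpr α hα β hβ hαβ
        obtain ⟨g₁, hg₁, hαs⟩ := Set.mem_iUnion₂.mp hα
        obtain ⟨g₂, hg₂, hβs⟩ := Set.mem_iUnion₂.mp hβ
        obtain ⟨ξ₁, hξ₁, rfl⟩ := hsel g₁ (Finset.mem_coe.mp hg₁)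
        obtain ⟨ξ₂, hξ₂, rfl⟩ := hsel g₂ (Finset.mem_coe.mp hg₂)
        have hp₁ : Pat ξ₁ ⟨j, hj⟩ = some pr := by rw [hPatmem ξ₁ hξ₁, hpr]
        have hp₂ : Pat ξ₂ ⟨j, hj⟩ = some pr := by rw [hPatmem ξ₂ hξ₂, hpr]
        rcases hq₁ : f ξ₁ j with - | q₁
        · exfalso; rw [hPat] at hp₁; simp only [hq₁] at hp₁; simp at hp₁
        rcases hq₂ : f ξ₂ j with - | q₂
        · exfalso; rw [hPat] at hp₂; simp only [hq₂] at hp₂; simp at hp₂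
        rw [hPat] at hp₁ hp₂
        simp only [hq₁, Option.map_some] at hp₁
        simp only [hq₂, Option.map_some] at hp₂
        have hpp₁ := Option.some.inj hp₁
        have hpp₂ := Option.some.inj hp₂
        have hfst₁ : q₁.val.1 = pr.1.val := by rw [← hpp₁]
        have hfst₂ : q₂.val.1 = pr.1.val := by rw [← hpp₂]
        have htr₁ : {a : ↥r | a.val ∈ q₁.val.2} = pr.2 := congrArg Prod.snd hpp₁
        have htr₂ : {a : ↥r | a.val ∈ q₂.val.2} = pr.2 := congrArg Prod.snd hpp₂
        have hαq₁ : α ∈ q₁.val.2 := by rw [hq₁] at hαs; exact hαs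
        have hβq₂ : β ∈ q₂.val.2 := by rw [hq₂] at hβs; exact hβs
        have hcol₁ : ∀ u ∈ q₁.val.2, ∀ v ∈ q₁.val.2, u < v → pr.1.val ≤ c u v := by
          intro u hu v hv huv
          rw [← hfst₁]
          exact q₁.2.2.2.2 u hu v hv huv
        have hcol₂ : ∀ u ∈ q₂.val.2, ∀ v ∈ q₂.val.2, u < v → pr.1.val ≤ c u v := by
          intro u hu v hv huv
          rw [← hfst₂]
          exact q₂.2.2.2.2 u hu v hv huv
        by_cases hβ₁ : β ∈ q₁.val.2
        · exact hcol₁ α hαq₁ β hβ₁ hαβ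
        by_cases hα₂ : α ∈ q₂.val.2
        · exact hcol₂ α hα₂ β hβq₂ hαβ
        by_cases hαr : α ∈ r
        · exfalso
          have hmem : (⟨α, hαr⟩ : ↥r) ∈ {a : ↥r | a.val ∈ q₁.val.2} := hαq₁
          rw [htr₁, ← htr₂] at hmem
          exact hα₂ hmem
        by_cases hβr : β ∈ r
        · exfalso
          have hmem : (⟨β, hβr⟩ : ↥r) ∈ {a : ↥r | a.val ∈ q₂.val.2} := hβq₂
          rw [htr₂, ← htr₁] at hmem
          exact hβ₁ hmem
        have hξne : ξ₁ ≠ ξ₂ := by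
          rintro rfl
          rw [hq₁] at hq₂
          have : q₁ = q₂ := Option.some.inj hq₂
          rw [← this] at hβq₂
          exact hβ₁ hβq₂
        have hmx₁ : α ∈ x ξ₁ \ r :=
          ⟨hsuppx ξ₁ j hj (by rw [hq₁]; exact hαq₁), hαr⟩
        have hmx₂ : β ∈ x ξ₂ \ r :=
          ⟨hsuppx ξ₂ j hj (by rw [hq₂]; exact hβq₂), hβr⟩
        exact le_of_lt (lt_of_le_of_lt (hcile j hj pr hpr)
          (Hcross ξ₁ hξ₁ ξ₂ hξ₂ hξne α hmx₁ β hmx₂ hαβ))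
      -- the common lower bound
      refine ⟨fun j => if hj : j < τ.ord then
        (match hm : pat ⟨j, hj⟩ with
         | none => none
         | some pr => some ⟨(pr.1.val, Y j), pr.1.2, hYsub j, hYsmall j, hkey j hj pr hm⟩)
        else none, ?_⟩
      intro g hg j hj
      obtain ⟨ξ, hξ, rfl⟩ := hsel g hg
      beta_reduce
      refine (congrArg (fun z => condLE z (f ξ j)) (dif_pos hj)).mpr ?_
      split
      · rename_i hm
        have hp : Pat ξ ⟨j, hj⟩ = none := by rw [hPatmem ξ hξ, hm]
        rcases hq : f ξ j with - | q
        · exact trivial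
        · exfalso; rw [hPat] at hp; simp only [hq] at hp; simp at hp
      · rename_i pr hm
        have hp : Pat ξ ⟨j, hj⟩ = some pr := by rw [hPatmem ξ hξ, hm]
        rcases hq : f ξ j with - | q
        · exfalso; rw [hPat] at hp; simp only [hq] at hp; simp at hp
        · rw [hPat] at hp
          simp only [hq, Option.map_some] at hp
          have hpp := Option.some.inj hp
          have hfsteq : q.val.1 = pr.1.val := by rw [← hpp]
          refine ⟨hfsteq.symm, ?_⟩
          intro v hv
          refine Set.mem_iUnion₂.mpr ⟨f ξ, Finset.mem_coe.mpr hg, ?_⟩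
          rw [hq]
          exact hv
  · -- Part 2: an antichain of size κ in ℙ^θ
    classical
    have hθo : (0:Ordinal) < θ.ord := Cardinal.lt_ord.mpr (by simpa using hθreg.pos)
    set F := fun (a : (Set.Iio κ.ord : Set Ordinal)) (i : Ordinal) =>
      if hi : i < θ.ord then
        (some ⟨(i, {a.val}), hi, by simpa using a.2,
          by
            rw [Cardinal.mk_singleton]
            exact lt_of_lt_of_le Cardinal.one_lt_aleph0 (aleph0_le_lift.mpr hχreg.1),
          by
            rintro α hα β hβ hαβ
            rw [Set.mem_singleton_iff] at hα hβ
            exact absurd (hβ ▸ hα ▸ hαβ) (lt_irrefl _)⟩ : Cond κ θ χ c)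
      else none with hF
    have hFinj : Function.Injective F := by
      intro a b hab
      have h0 := congrFun hab 0
      simp only [hF, dif_pos hθo] at h0
      have := Option.some_injective _ h0
      have h2 := congrArg (fun q => q.val.2) this
      simp only at h2
      exact Subtype.ext (Set.singleton_eq_singleton_iff.mp h2)
    refine ⟨Set.range F, ?_, ?_⟩
    · rw [HasCard]; exact (Cardinal.mk_range_eq F hFinj).trans (by rw [mk_Iio_ord, Cardinal.card_ord])
    · have haux : ∀ a b : (Set.Iio κ.ord : Set Ordinal), a.val < b.val →
          ¬ ∃ h, powLE θ.ord h (F a) ∧ powLE θ.ord h (F b) := by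
        rintro a b hab ⟨h, hfa, hfb⟩
        have hcol : c a.val b.val < θ.ord := hc.1 a.val b.val hab b.2
        have hi : c a.val b.val + 1 < θ.ord := by
          have := (Cardinal.isSuccLimit_ord hθreg.1).succ_lt hcol
          simpa using this
        set i := c a.val b.val + 1 with hidef
        have hfa2 := hfa i hi
        have hfb2 := hfb i hi
        simp only [hF, dif_pos hi] at hfa2 hfb2
        rcases hh : h i with - | p
        · rw [hh] at hfa2
          exact hfa2
        · rw [hh] at hfa2 hfb2
          obtain ⟨he1, hs1⟩ := hfa2
          obtain ⟨-, hs2⟩ := hfb2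
          have hmema : a.val ∈ p.val.2 := hs1 rfl
          have hmemb : b.val ∈ p.val.2 := hs2 rfl
          have := p.2.2.2.2 a.val hmema b.val hmemb hab
          rw [he1] at this
          exact absurd (lt_of_lt_of_le (by simpa [hidef] using Order.lt_succ (c a.val b.val)) this)
            (lt_irrefl _)
      rintro f ⟨a, rfl⟩ g ⟨b, rfl⟩ hfg
      rcases lt_trichotomy a.val b.val with hlt | heq | hgt
      · exact haux a b hlt
      · exact absurd (congrArg F (Subtype.ext heq)) hfg
      · intro ⟨h, h1, h2⟩
        exact haux b a hgt ⟨h, h2, h1⟩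
end
end

section
/- Suppose λ = λ^{<λ} is a regular uncountable cardinal and, for each i < ω, P_i is a λ-centered poset. Then the full-support product ∏_{i<ω} P_i is λ-centered. -/
open Cardinal Set Ordinal

noncomputable section

/-- A poset `P` is `λ`-centered: it is covered by `λ`-many centered subsets, where a
subset is centered iff each of its finite subsets has a lower bound in `P`. -/
def LamCentered (lam : Cardinal) (P : Type u) [Preorder P] : Prop :=
  ∃ F : P → Ordinal, (∀ p, F p < lam.ord) ∧
    ∀ o : Ordinal, ∀ s : Finset P, (∀ p ∈ s, F p = o) → ∃ q, ∀ p ∈ s, q ≤ p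

universe v in
lemma stmt8_aux (lam : Cardinal.{v}) (hpow' : lam ^ (ℵ₀ : Cardinal) = lam) :
    #(ℕ → (Set.Iio lam.ord)) ≤ #(Set.Iio lam.ord) := by
  apply le_of_eq
  have hX := Ordinal.mk_Iio_ordinal lam.ord
  rw [Cardinal.card_ord] at hX
  rw [Cardinal.mk_arrow, Cardinal.lift_uzero, Cardinal.mk_nat, Cardinal.lift_aleph0, hX]
  calc Cardinal.lift.{v+1} lam ^ (ℵ₀ : Cardinal) = Cardinal.lift.{v+1} (lam ^ ℵ₀) := by
        rw [Cardinal.lift_power, Cardinal.lift_aleph0]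
    _ = Cardinal.lift.{v+1} lam := by rw [hpow']

theorem stmt8 (lam : Cardinal) (hreg : lam.IsRegular) (hunc : ℵ₀ < lam)
    (hpow : Cardinal.powerlt lam lam = lam)
    (P : ℕ → Type u) [∀ i, Preorder (P i)]
    (h : ∀ i, LamCentered lam (P i)) :
    LamCentered lam (∀ i, P i) := by
  classical
  choose F hF1 hF2 using h
  -- λ ^ ℵ₀ = λ
  have hpow' : lam ^ (ℵ₀ : Cardinal) = lam := by
    apply le_antisymm
    · calc lam ^ (ℵ₀ : Cardinal) ≤ lam.powerlt lam := Cardinal.le_powerlt lam hunc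
      _ = lam := hpow
    · conv_lhs => rw [← Cardinal.power_one lam]
      exact Cardinal.power_le_power_left hreg.pos.ne' (le_of_lt Cardinal.one_lt_aleph0)
  set X := Set.Iio lam.ord
  have hle : #(ℕ → X) ≤ #X := stmt8_aux lam hpow'
  obtain ⟨e⟩ := Cardinal.le_def _ _ |>.mp hle
  refine ⟨fun p => (e fun i => ⟨F i (p i), hF1 i (p i)⟩).val, fun p => (e _).2, ?_⟩
  intro o s hs
  rcases s.eq_empty_or_nonempty with rfl | ⟨p₀, hp₀⟩
  · have : ∀ i, ∃ q : P i, True := by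
      intro i
      obtain ⟨q, -⟩ := hF2 i 0 ∅ (by simp)
      exact ⟨q, trivial⟩
    choose q _ using this
    exact ⟨q, by simp⟩
  · have key : ∀ p ∈ s, ∀ i, F i (p i) = F i (p₀ i) := by
      intro p hp i
      have : (e fun i => ⟨F i (p i), hF1 i (p i)⟩) = e fun i => ⟨F i (p₀ i), hF1 i (p₀ i)⟩ :=
        Subtype.ext ((hs p hp).trans (hs p₀ hp₀).symm)
      have := congrFun (e.injective this) i
      exact Subtype.ext_iff.mp this
    have : ∀ i, ∃ q : P i, ∀ p ∈ s.image (fun p => p i), q ≤ p := by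
      intro i
      apply hF2 i (F i (p₀ i))
      intro x hx
      obtain ⟨p, hp, rfl⟩ := Finset.mem_image.mp hx
      exact key p hp i
    choose q hq using this
    refine ⟨q, fun p hp i => hq i (p i) (Finset.mem_image_of_mem _ hp)⟩
end
end

section
/- Suppose c : [κ]² → θ is a coloring, ω ≤ χ < κ, and for every family A ⊆ [κ]^{<χ} of κ-many pairwise disjoint sets, every club D ⊆ κ, and every i < θ, there exist γ ∈ D, a ∈ A, and ε < γ such that γ < a and for all α ∈ (ε, γ) and β ∈ a we have c(α,β) > i. Then c witnesses U(κ, κ, θ, χ): for every family A ⊆ [κ]^{<χ} of κ-many pairwise disjoint sets and every i < θ, there exists B ∈ [A]^κ with min(c[a × b]) > i for all pairs a < b from B. -/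
open Cardinal Set Ordinal

noncomputable section

/-- Any subset of `Iio κ.ord` of cardinality `< κ`, with `κ` regular, is bounded below `κ.ord`. -/
lemma bdd_helper {κ : Cardinal} (hreg : κ.IsRegular) {s : Set Ordinal}
    (hsub : s ⊆ Set.Iio κ.ord) (hcard : Cardinal.mk s < Cardinal.lift.{1, 0} κ) :
    ∃ b < κ.ord, ∀ x ∈ s, x ≤ b := by
  obtain ⟨μ, hμκ, hμ⟩ := Cardinal.lt_lift_iff.mp hcard
  have hmk : #(ULift.{1} μ.out) = #s := by rw [mk_uLift, mk_out, hμ]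
  obtain ⟨e⟩ := Cardinal.eq.mp hmk
  set f : μ.out → Ordinal := fun x => ((e ⟨x⟩ : s) : Ordinal) with hf
  have hlt : ∀ x, f x < κ.ord := fun x => hsub (e ⟨x⟩).2
  refine ⟨⨆ x, f x, ?_, ?_⟩
  · exact Cardinal.iSup_lt_ord_of_isRegular hreg (by rw [mk_out]; exact hμκ) hlt
  · intro x hx
    have : f (e.symm ⟨x, hx⟩).down = x := by
      simp [hf, ULift.up_down]
    rw [← this]
    exact le_ciSup (Ordinal.bddAbove_range f) _

/-- Transfinite recursion: at each stage apply `F` to the set of previous values. -/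
noncomputable def recG (F : Set Ordinal → Ordinal) : Ordinal → Ordinal :=
  WellFounded.fix Ordinal.lt_wf (fun ξ IH => F {y | ∃ η, ∃ h : η < ξ, y = IH η h})

lemma recG_eq (F : Set Ordinal → Ordinal) (ξ : Ordinal) :
    recG F ξ = F (recG F '' Set.Iio ξ) := by
  rw [recG, WellFounded.fix_eq]
  congr 1
  ext y
  simp only [Set.mem_setOf_eq, Set.mem_image, Set.mem_Iio]
  constructor
  · rintro ⟨η, h, rfl⟩; exact ⟨η, h, rfl⟩
  · rintro ⟨η, h, rfl⟩; exact ⟨η, h, rfl⟩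

/-- From an unbounded set `T` in a regular `κ` one can select a `κ.ord`-indexed increasing
sequence from `T` such that each chosen element lies above `M` of all previous choices. -/
lemma sep_rec {κ : Cardinal.{0}} (hreg : κ.IsRegular)
    {T : Set Ordinal} {M : Ordinal → Ordinal}
    (hub : ∀ x < κ.ord, ∃ γ ∈ T, x < γ)
    (hM : ∀ γ ∈ T, M γ < κ.ord) :
    ∃ G : Ordinal → Ordinal, (∀ ξ, ξ < κ.ord → G ξ ∈ T) ∧
      ∀ η ξ, η < ξ → ξ < κ.ord → M (G η) < G ξ := by
  classical
  set F : Set Ordinal → Ordinal := fun s =>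
    if h : ∃ b, b < κ.ord ∧ ∀ γ ∈ s, M γ ≤ b then
      Classical.choose (hub (Classical.choose h) (Classical.choose_spec h).1)
    else 0 with hF
  have main : ∀ ξ, ξ < κ.ord → recG F ξ ∈ T ∧ ∀ η < ξ, M (recG F η) < recG F ξ := by
    intro ξ
    induction ξ using Ordinal.induction with
    | h ξ IH =>
      intro hξ
      have hex : ∃ b, b < κ.ord ∧ ∀ γ ∈ recG F '' Set.Iio ξ, M γ ≤ b := by
        have h1 : M '' (recG F '' Set.Iio ξ) ⊆ Set.Iio κ.ord := by
          rintro _ ⟨_, ⟨η, hη, rfl⟩, rfl⟩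
          exact hM _ ((IH η hη (hη.trans hξ)).1)
        have h2 : #(M '' (recG F '' Set.Iio ξ)) < Cardinal.lift.{1, 0} κ := by
          calc #(M '' (recG F '' Set.Iio ξ)) ≤ #(Set.Iio ξ) :=
                (Cardinal.mk_image_le).trans Cardinal.mk_image_le
            _ = Cardinal.lift.{1} ξ.card := Ordinal.mk_Iio_ordinal ξ
            _ < Cardinal.lift.{1} κ := Cardinal.lift_lt.2 (Cardinal.lt_ord.mp hξ)
        obtain ⟨b, hb, hball⟩ := bdd_helper hreg h1 h2
        exact ⟨b, hb, fun γ hγ => hball _ (Set.mem_image_of_mem _ hγ)⟩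
      have heq : recG F ξ = F (recG F '' Set.Iio ξ) := recG_eq F ξ
      have hFval : F (recG F '' Set.Iio ξ) =
          Classical.choose (hub (Classical.choose hex) (Classical.choose_spec hex).1) := by
        exact dif_pos hex
      have hspec := Classical.choose_spec (hub (Classical.choose hex) (Classical.choose_spec hex).1)
      rw [heq, hFval]
      refine ⟨hspec.1, fun η hη => ?_⟩
      exact lt_of_le_of_lt ((Classical.choose_spec hex).2 _ (Set.mem_image_of_mem _ hη)) hspec.2
  exact ⟨recG F, fun ξ h => (main ξ h).1, fun η ξ hηξ hξ => (main ξ hξ).2 η hηξ⟩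

theorem stmt9 (κ θ χ : Cardinal) (c : Ordinal → Ordinal → Ordinal)
    (hκreg : κ.IsRegular) (hκunc : ℵ₀ < κ) (hθκ : θ ≤ κ)
    (hχ1 : ℵ₀ ≤ χ) (hχ2 : χ < κ)
    (hc : IsColoring κ θ c)
    (H : ∀ A : Set (Set Ordinal), IsDisjFamilyLT κ χ A →
      ∀ D : Set Ordinal, IsClubBelow D κ.ord → ∀ i < θ.ord,
        ∃ γ ∈ D, ∃ a ∈ A, ∃ ε < γ, (∀ β ∈ a, γ < β) ∧
          ∀ α, ε < α → α < γ → ∀ β ∈ a, i < c α β) :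
    ∀ A : Set (Set Ordinal), IsDisjFamilyLT κ χ A → ∀ i < θ.ord,
      ∃ B ⊆ A, HasCard B κ ∧
        ∀ a ∈ B, ∀ b ∈ B, SetLT a b → ∀ α ∈ a, ∀ β ∈ b, i < c α β := by
  classical
  intro A hA i hi
  have hκord : Order.IsSuccLimit κ.ord := Cardinal.isSuccLimit_ord hκreg.aleph0_le
  -- Step 0: remove the possible empty set from `A`.
  set A' : Set (Set Ordinal) := A \ {∅} with hA'def
  have hA'subA : A' ⊆ A := Set.diff_subset
  have hA'card : HasCard A' κ := by
    have hAcard : #A = Cardinal.lift.{1, 0} κ := hA.2.2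
    have hle : #A ≤ #A' + 1 := by
      have hsub : A ⊆ A' ∪ {∅} := by
        intro a ha
        by_cases h : a = ∅
        · exact Or.inr (by simp [h])
        · exact Or.inl ⟨ha, by simp [h]⟩
      calc #A ≤ #(A' ∪ {∅} : Set (Set Ordinal)) := Cardinal.mk_le_mk_of_subset hsub
        _ ≤ #A' + #({∅} : Set (Set Ordinal)) := Cardinal.mk_union_le _ _
        _ = #A' + 1 := by rw [Cardinal.mk_singleton]
    have hinf : ℵ₀ ≤ #A' := by
      by_contra h
      push_neg at h
      have h2 : #A < ℵ₀ := lt_of_le_of_lt hle (Cardinal.add_lt_aleph0 h Cardinal.one_lt_aleph0)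
      rw [hAcard] at h2
      exact absurd h2 (not_lt.2 (Cardinal.aleph0_le_lift.2 hκreg.aleph0_le))
    have h3 : #A ≤ #A' := hle.trans_eq (Cardinal.add_one_eq hinf)
    show #A' = Cardinal.lift.{1, 0} κ
    exact (le_antisymm (Cardinal.mk_le_mk_of_subset hA'subA) h3).symm ▸ hAcard
  have hA' : IsDisjFamilyLT κ χ A' :=
    ⟨fun a ha => hA.1 a (hA'subA ha), hA.2.1.subset hA'subA, hA'card⟩
  have hne : ∀ a ∈ A', a.Nonempty := by
    intro a ha
    rcases ha with ⟨_, h2⟩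
    exact Set.nonempty_iff_ne_empty.2 (by simpa using h2)
  -- the interval property
  set Q0 : Ordinal → Ordinal → Prop := fun γ ε =>
    ∃ a ∈ A', (∀ β ∈ a, γ < β) ∧ ∀ α, ε < α → α < γ → ∀ β ∈ a, i < c α β with hQ0def
  -- Step 1+2: pressing down; there is a single `ε` working unboundedly often.
  have key : ∃ ε < κ.ord, ∀ x < κ.ord, ∃ γ, x < γ ∧ γ < κ.ord ∧ ε < γ ∧ Q0 γ ε := by
    by_contra hcon
    push_neg at hcon
    choose! x hx using hcon
    have hstep : ∀ y, y < κ.ord → ∃ z, y < z ∧ z < κ.ord ∧ ∀ ε ≤ y, x ε < z := by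
      intro y hy
      have hsub : x '' Set.Iic y ⊆ Set.Iio κ.ord := by
        rintro _ ⟨ε, hε, rfl⟩; exact (hx ε (lt_of_le_of_lt hε hy)).1
      have hcard : #(x '' Set.Iic y) < Cardinal.lift.{1, 0} κ := by
        calc #(x '' Set.Iic y) ≤ #(Set.Iic y) := Cardinal.mk_image_le
          _ ≤ #(Set.Iio (y + 1)) := Cardinal.mk_le_mk_of_subset
              (by rw [Ordinal.add_one_eq_succ]; exact Order.Iic_subset_Iio_succ y)
          _ = Cardinal.lift.{1} (y + 1).card := Ordinal.mk_Iio_ordinal _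
          _ < Cardinal.lift.{1} κ := Cardinal.lift_lt.2 (Cardinal.lt_ord.mp
              (by rw [Ordinal.add_one_eq_succ]; exact hκord.succ_lt hy))
      obtain ⟨b, hb, hball⟩ := bdd_helper hκreg hsub hcard
      refine ⟨max y b + 1, ?_, ?_, fun ε hε => ?_⟩
      · exact lt_of_le_of_lt (le_max_left y b)
          (by rw [Ordinal.add_one_eq_succ]; exact Order.lt_succ _)
      · rw [Ordinal.add_one_eq_succ]; exact hκord.succ_lt (max_lt hy hb)
      · exact lt_of_le_of_lt ((hball _ (Set.mem_image_of_mem _ hε)).trans (le_max_right y b))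
          (by rw [Ordinal.add_one_eq_succ]; exact Order.lt_succ _)
    choose! step hs1 hs2 hs3 using hstep
    set D : Set Ordinal := {γ | γ < κ.ord ∧ 0 < γ ∧ ∀ ε < γ, x ε < γ} with hDdef
    have hD : IsClubBelow D κ.ord := by
      refine ⟨fun γ hγ => hγ.1, ?_, ?_⟩
      · intro α hα
        set f : ℕ → Ordinal := fun n => Nat.rec (α + 1) (fun _ ih => step ih) n with hfdef
        have hfs : ∀ n, f (n + 1) = step (f n) := fun n => rfl
        have hfκ : ∀ n, f n < κ.ord := by
          intro n
          induction n with
          | zero =>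
            rw [show f 0 = α + 1 from rfl, Ordinal.add_one_eq_succ]
            exact hκord.succ_lt hα
          | succ n ih => rw [hfs]; exact hs2 _ ih
        have hbdd := Ordinal.bddAbove_range f
        refine ⟨⨆ n, f n, ⟨?_, ?_, ?_⟩, ?_⟩
        · exact Cardinal.iSup_lt_ord_of_isRegular hκreg
            (by rw [Cardinal.mk_eq_aleph0]; exact hκunc) hfκ
        · refine lt_of_lt_of_le ?_ (le_ciSup hbdd 0)
          rw [show f 0 = α + 1 from rfl, Ordinal.add_one_eq_succ]
          exact lt_of_le_of_lt (zero_le (a := α)) (Order.lt_succ α)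
        · intro ε hε
          obtain ⟨n, hn⟩ := (lt_ciSup_iff hbdd).mp hε
          exact lt_of_lt_of_le (hs3 (f n) (hfκ n) ε hn.le) ((hfs n ▸ le_ciSup hbdd (n + 1)))
        · exact le_of_lt (lt_of_lt_of_le
            (by rw [show f 0 = α + 1 from rfl, Ordinal.add_one_eq_succ]; exact Order.lt_succ α)
            (le_ciSup hbdd 0))
      · intro γ hγκ hγ0 hcl
        refine ⟨hγκ, hγ0, fun ε hε => ?_⟩
        obtain ⟨β, hβD, hεβ, hβγ⟩ := hcl ε hε
        exact (hβD.2.2 ε hεβ).trans hβγ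
    obtain ⟨γ, hγD, a, haA', ε, hεγ, hγa, hcol⟩ := H A' hA' D hD i hi
    exact (hx ε (hεγ.trans hγD.1)).2 γ (hγD.2.2 ε hεγ) hγD.1 hεγ ⟨a, haA', hγa, hcol⟩
  obtain ⟨ε, hεκ, hub0⟩ := key
  -- Step 3: build the separated sequence.
  set T : Set Ordinal := {γ | γ < κ.ord ∧ ε < γ ∧ Q0 γ ε} with hTdef
  have hub : ∀ x < κ.ord, ∃ γ ∈ T, x < γ := by
    intro x hx
    obtain ⟨γ, h1, h2, h3, h4⟩ := hub0 x hx
    exact ⟨γ, ⟨h2, h3, h4⟩, h1⟩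
  have haa0 : ∀ γ, γ ∈ T → ∃ a, a ∈ A' ∧ (∀ β ∈ a, γ < β) ∧
      ∀ α, ε < α → α < γ → ∀ β ∈ a, i < c α β := fun γ h => by
    obtain ⟨a, ha1, ha2, ha3⟩ := h.2.2
    exact ⟨a, ha1, ha2, ha3⟩
  choose! aa haa1 haa2 haa3 using haa0
  have hM0 : ∀ γ, γ ∈ T → ∃ b, γ < b ∧ b < κ.ord ∧ ∀ y ∈ aa γ, y < b := by
    intro γ hγ
    have hmem := hA.1 _ (hA'subA (haa1 γ hγ))
    obtain ⟨b, hb, hball⟩ := bdd_helper hκreg hmem.1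
      (hmem.2.trans (Cardinal.lift_lt.2 hχ2))
    refine ⟨max γ b + 1, ?_, ?_, fun y hy => ?_⟩
    · exact lt_of_le_of_lt (le_max_left γ b)
        (by rw [Ordinal.add_one_eq_succ]; exact Order.lt_succ _)
    · rw [Ordinal.add_one_eq_succ]; exact hκord.succ_lt (max_lt hγ.1 hb)
    · exact lt_of_le_of_lt ((hball _ hy).trans (le_max_right γ b))
        (by rw [Ordinal.add_one_eq_succ]; exact Order.lt_succ _)
  choose! M hM1 hM2 hM3 using hM0
  obtain ⟨G, hGT, hGsep⟩ := sep_rec hκreg hub hM2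
  set B : Set (Set Ordinal) := (fun ξ => aa (G ξ)) '' Set.Iio κ.ord with hBdef
  have hsmall : ∀ η ξ, η < ξ → ξ < κ.ord → ∀ y ∈ aa (G η), y < G ξ := fun η ξ hηξ hξ y hy =>
    lt_trans (hM3 (G η) (hGT η (hηξ.trans hξ)) y hy) (hGsep η ξ hηξ hξ)
  have hbig : ∀ ξ, ξ < κ.ord → ∀ β ∈ aa (G ξ), G ξ < β := fun ξ hξ => haa2 (G ξ) (hGT ξ hξ)
  have hεlt : ∀ ξ, ξ < κ.ord → ε < G ξ := fun ξ h => (hGT ξ h).2.1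
  have hne' : ∀ ξ, ξ < κ.ord → (aa (G ξ)).Nonempty := fun ξ h => hne _ (haa1 _ (hGT ξ h))
  have hneq : ∀ η ξ, η < ξ → ξ < κ.ord → aa (G η) ≠ aa (G ξ) := by
    intro η ξ h hξ heq
    obtain ⟨β, hβ⟩ := hne' ξ hξ
    have h1 : β < G ξ := hsmall η ξ h hξ β (heq ▸ hβ)
    exact absurd (hbig ξ hξ β hβ) (lt_asymm h1)
  have hinj : Set.InjOn (fun ξ => aa (G ξ)) (Set.Iio κ.ord) := by
    intro η hη ξ hξ heq
    by_contra hd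
    rcases Ne.lt_or_gt hd with h | h
    · exact hneq η ξ h hξ heq
    · exact hneq ξ η h hη heq.symm
  refine ⟨B, ?_, ?_, ?_⟩
  · rintro _ ⟨ξ, hξ, rfl⟩
    exact hA'subA (haa1 _ (hGT ξ hξ))
  · show #B = Cardinal.lift.{1, 0} κ
    rw [hBdef, Cardinal.mk_image_eq_of_injOn _ _ hinj, Ordinal.mk_Iio_ordinal,
      Cardinal.card_ord]
  · intro a ha b hb hab α hα β hβ
    obtain ⟨η, hη, rfl⟩ := ha
    obtain ⟨ξ, hξ, rfl⟩ := hb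
    rcases lt_trichotomy η ξ with h | rfl | h
    · exact haa3 (G ξ) (hGT ξ hξ) α (lt_trans (hεlt η hη) (hbig η hη α hα))
        (hsmall η ξ h hξ α hα) β hβ
    · exact absurd (hab α hα α hα) (lt_irrefl α)
    · have h1 : β < α := lt_trans (hsmall ξ η h hη β hβ) (hbig η hη α hα)
      exact absurd (hab α hα β hβ) (lt_asymm h1)
end
end
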